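/- arXiv:1309.2775 — 8 statements merged into one kernel-verified Lean document; each statement's English description precedes it below -/
import Mathlib

section
/- Let (X,d) be a metric space, n a natural number, and let D(r) = A·r + B with A ≥ 1 and B ≥ 0 be an affine n-dimensional control function for (X,d). Let c : [0,∞) → [0,∞) be concave, unbounded, and satisfy c(r) = 0 if and only if r = 0, and let d' = c ∘ d. Then the affine function D'(r) = A·r + c(B) is an n-dimensional control function for the metric space (X, d'). -/
/-- `D` is an `n`-dimensional control function for the space `X` with distance
function `d`: for every `r > 0` there are `n + 1` families of subsets of `X`
whose union covers `X`, each family being `r`-disjoint, with all members of all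
families of diameter at most `D r`. -/
def IsControlFunction {X : Type*} (d : X → X → ℝ) (n : ℕ) (D : ℝ → ℝ) : Prop :=
  ∀ r : ℝ, 0 < r → ∃ 𝒰 : Fin (n + 1) → Set (Set X),
    (∀ x : X, ∃ i, ∃ U ∈ 𝒰 i, x ∈ U) ∧
    (∀ i, ∀ U ∈ 𝒰 i, ∀ V ∈ 𝒰 i, U ≠ V → ∀ u ∈ U, ∀ v ∈ V, r ≤ d u v) ∧
    (∀ i, ∀ U ∈ 𝒰 i, ∀ u ∈ U, ∀ v ∈ U, d u v ≤ D r)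

theorem stmt_7 (X : Type*) [MetricSpace X] (n : ℕ) (A B : ℝ)
    (hA : 1 ≤ A) (hB : 0 ≤ B)
    (hD : IsControlFunction (fun x y : X => dist x y) n (fun r => A * r + B))
    (c : ℝ → ℝ)
    (hnonneg : ∀ r, 0 ≤ r → 0 ≤ c r)
    (hconcave : ConcaveOn ℝ (Set.Ici (0 : ℝ)) c)
    (hunbounded : ∀ M : ℝ, ∃ r, 0 ≤ r ∧ M ≤ c r)
    (hzero : ∀ r, 0 ≤ r → (c r = 0 ↔ r = 0)) :
    IsControlFunction (fun x y : X => c (dist x y)) n (fun r => A * r + c B) := by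
  have c0 : c 0 = 0 := (hzero 0 le_rfl).mpr rfl
  -- chord inequality for concave functions
  have chord : ∀ x y z : ℝ, 0 ≤ x → x ≤ y → y ≤ z → x < z →
      (z - y) * c x + (y - x) * c z ≤ (z - x) * c y := by
    intro x y z hx hxy hyz hxz
    have hzx : (0:ℝ) < z - x := by linarith
    have key := hconcave.2 (Set.mem_Ici.mpr hx) (Set.mem_Ici.mpr (by linarith : (0:ℝ) ≤ z))
      (show (0:ℝ) ≤ (z - y) / (z - x) by apply div_nonneg <;> linarith)
      (show (0:ℝ) ≤ (y - x) / (z - x) by apply div_nonneg <;> linarith)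
      (show (z - y) / (z - x) + (y - x) / (z - x) = 1 by field_simp; ring)
    have hpt : ((z - y) / (z - x)) • x + ((y - x) / (z - x)) • z = y := by
      rw [smul_eq_mul, smul_eq_mul, div_mul_eq_mul_div, div_mul_eq_mul_div, ← add_div, div_eq_iff hzx.ne']
      ring
    rw [hpt] at key
    simp only [smul_eq_mul] at key
    rw [div_mul_eq_mul_div, div_mul_eq_mul_div, ← add_div, div_le_iff₀ hzx] at key
    linarith [key]
  -- monotonicity
  have mono : ∀ a b : ℝ, 0 ≤ a → a ≤ b → c a ≤ c b := by
    intro a b ha hab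
    by_contra h
    push_neg at h
    have hab' : a < b := by
      rcases lt_or_eq_of_le hab with h' | h'
      · exact h'
      · exact absurd h (by rw [h']; exact lt_irrefl _)
    have hb : 0 < b := lt_of_le_of_lt ha hab'
    have hcb : 0 ≤ c b := hnonneg b hb.le
    -- all values of c are ≤ 2 * c b
    have bound : ∀ t, 0 ≤ t → c t ≤ 2 * c b := by
      intro t ht
      rcases le_or_gt t b with htb | hbt
      · rcases eq_or_lt_of_le ht with h0 | h0
        · rw [← h0, c0]; linarith
        · -- 0 < t ≤ b : chord t b (2b)
          have h2 := chord t b (2 * b) h0.le htb (by linarith) (by linarith)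
          have hc2b : 0 ≤ c (2 * b) := hnonneg _ (by linarith)
          nlinarith
      · -- b < t : chord a b t
        have h2 := chord a b t ha hab'.le hbt.le (by linarith)
        nlinarith
    obtain ⟨t, ht, hct⟩ := hunbounded (2 * c b + 1)
    have := bound t ht
    linarith
  -- subadditivity
  have subadd : ∀ x y : ℝ, 0 ≤ x → 0 ≤ y → c (x + y) ≤ c x + c y := by
    intro x y hx hy
    rcases eq_or_lt_of_le hx with h0 | h0
    · rw [← h0, zero_add, c0]; linarith
    rcases eq_or_lt_of_le hy with h0' | h0'
    · rw [← h0', add_zero, c0]; linarith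
    have h1 := chord 0 x (x + y) le_rfl hx (by linarith) (by linarith)
    have h2 := chord 0 y (x + y) le_rfl hy (by linarith) (by linarith)
    rw [c0] at h1 h2
    have hxy : (0:ℝ) < x + y := by linarith
    nlinarith
  -- c (A * s) ≤ A * c s for s ≥ 0
  have homog : ∀ s : ℝ, 0 ≤ s → c (A * s) ≤ A * c s := by
    intro s hs
    rcases eq_or_lt_of_le hA with hA1 | hA1
    · rw [← hA1, one_mul, one_mul]
    rcases eq_or_lt_of_le hs with h0 | h0
    · rw [← h0, mul_zero, c0, mul_zero]
    have h1 := chord 0 s (A * s) le_rfl hs (by nlinarith) (by nlinarith)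
    rw [c0] at h1
    nlinarith
  intro r hr
  by_cases h1 : ∀ t : ℝ, 0 < t → r ≤ c t
  · -- cover by singletons
    refine ⟨fun _ => Set.range (fun x : X => ({x} : Set X)), ?_, ?_, ?_⟩
    · intro x
      exact ⟨0, {x}, ⟨x, rfl⟩, rfl⟩
    · intro i U hU V hV hUV u hu v hv
      obtain ⟨a, rfl⟩ := hU
      obtain ⟨b, rfl⟩ := hV
      simp only [Set.mem_singleton_iff] at hu hv
      subst hu; subst hv
      have huv : u ≠ v := fun h => hUV (by rw [h])
      exact h1 _ (dist_pos.mpr huv)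
    · intro i U hU u hu v hv
      obtain ⟨a, rfl⟩ := hU
      simp only [Set.mem_singleton_iff] at hu hv
      have : u = v := hu.trans hv.symm
      simp only [this, dist_self, c0]
      have : 0 ≤ c B := hnonneg B hB
      nlinarith
  · push_neg at h1
    obtain ⟨t₀, ht₀, hct₀⟩ := h1
    obtain ⟨T, hT, hcT⟩ := hunbounded r
    have ht₀T : t₀ ≤ T := by
      by_contra h
      push_neg at h
      have := mono T t₀ hT h.le
      linarith
    -- continuity of c on (0, ∞)
    have cont : ContinuousOn c (Set.Ioi (0:ℝ)) := by
      have := hconcave.continuousOn_interior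
      rwa [interior_Ici] at this
    have cont' : ContinuousOn c (Set.Icc t₀ T) :=
      cont.mono (fun x hx => lt_of_lt_of_le ht₀ hx.1)
    have := intermediate_value_Icc ht₀T cont'
    obtain ⟨s, hsmem, hcs⟩ := this ⟨hct₀.le, hcT⟩
    have hs : 0 < s := lt_of_lt_of_le ht₀ hsmem.1
    obtain ⟨𝒰, hcov, hdisj, hdiam⟩ := hD s hs
    refine ⟨𝒰, hcov, ?_, ?_⟩
    · intro i U hU V hV hUV u hu v hv
      have := hdisj i U hU V hV hUV u hu v hv
      calc r = c s := hcs.symm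
        _ ≤ c (dist u v) := mono s (dist u v) hs.le this
    · intro i U hU u hu v hv
      have hd := hdiam i U hU u hu v hv
      have h2 : c (dist u v) ≤ c (A * s + B) := mono _ _ dist_nonneg hd
      have h3 : c (A * s + B) ≤ c (A * s) + c B := subadd _ _ (by nlinarith) hB
      have h4 : c (A * s) ≤ A * c s := homog s hs.le
      rw [hcs] at h4
      simp only []
      linarith
end

section
/- Let (X,d) be a metric space and n a natural number such that (X,d) admits a real-valued n-dimensional control function. Then there exists a function c : [0,∞) → [0,∞) that is concave, strictly increasing, continuous, unbounded, with c(0) = 0, such that d' = c ∘ d is a metric on X and the affine function D'(r) = r + 2 is an n-dimensional control function for (X, d'). -/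
/-- A function `d : X → X → ℝ` is a metric on `X`. -/
def IsMetric {X : Type*} (d : X → X → ℝ) : Prop :=
  (∀ x y, 0 ≤ d x y) ∧ (∀ x y, (d x y = 0 ↔ x = y)) ∧
  (∀ x y, d x y = d y x) ∧ (∀ x y z, d x z ≤ d x y + d y z)

namespace Stmt8Aux

variable (D : ℝ → ℝ)

/-- `(seq D n).1` is the breakpoint `t n`, `(seq D n).2` is the gap `g n = t (n+1) - t n`. -/
noncomputable def seq : ℕ → ℝ × ℝ
  | 0 => (0, 1)
  | n + 1 =>
    let p := seq n
    (p.1 + p.2, max p.2 (D (p.1 + p.2) + 1 - (p.1 + p.2)))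

noncomputable def t (n : ℕ) : ℝ := (seq D n).1
noncomputable def g (n : ℕ) : ℝ := (seq D n).2

lemma t_zero : t D 0 = 0 := rfl
lemma g_zero : g D 0 = 1 := rfl

lemma t_succ (n : ℕ) : t D (n + 1) = t D n + g D n := rfl

lemma g_succ (n : ℕ) :
    g D (n + 1) = max (g D n) (D (t D (n + 1)) + 1 - t D (n + 1)) := rfl

lemma g_le_succ (n : ℕ) : g D n ≤ g D (n + 1) := by
  rw [g_succ]; exact le_max_left _ _

lemma g_monotone : Monotone (g D) := monotone_nat_of_le_succ (g_le_succ D)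

lemma one_le_g (n : ℕ) : 1 ≤ g D n := by
  simpa [g_zero] using g_monotone D (Nat.zero_le n)

lemma g_pos (n : ℕ) : 0 < g D n := lt_of_lt_of_le one_pos (one_le_g D n)

lemma t_strictMono : StrictMono (t D) := by
  apply strictMono_nat_of_lt_succ
  intro n
  rw [t_succ]
  linarith [g_pos D n]

lemma t_monotone : Monotone (t D) := (t_strictMono D).monotone

lemma t_nonneg (n : ℕ) : 0 ≤ t D n := by
  simpa [t_zero] using t_monotone D (Nat.zero_le n)

lemma nat_le_t (n : ℕ) : (n : ℝ) ≤ t D n := by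
  induction n with
  | zero => simp [t_zero]
  | succ n ih =>
    rw [t_succ]
    push_cast
    linarith [one_le_g D n]

lemma D_t_le (k : ℕ) : D (t D (k + 1)) ≤ t D (k + 2) := by
  have h2 : t D (k + 2) = t D (k + 1) + g D (k + 1) := t_succ D (k + 1)
  have hg : D (t D (k + 1)) + 1 - t D (k + 1) ≤ g D (k + 1) := by
    rw [g_succ]; exact le_max_right _ _
  linarith

lemma exists_lt_t (x : ℝ) : ∃ k : ℕ, x < t D (k + 1) := by
  refine ⟨⌈x⌉₊, lt_of_lt_of_le ?_ (nat_le_t D (⌈x⌉₊ + 1))⟩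
  push_cast
  calc x ≤ (⌈x⌉₊ : ℝ) := Nat.le_ceil x
    _ < (⌈x⌉₊ : ℝ) + 1 := by linarith

/-- Index of the interval `[t k, t (k+1))` containing `x`. -/
noncomputable def idx (x : ℝ) : ℕ := Nat.find (exists_lt_t D x)

lemma lt_t_idx_succ (x : ℝ) : x < t D (idx D x + 1) := Nat.find_spec (exists_lt_t D x)

lemma t_idx_le {x : ℝ} (hx : 0 ≤ x) : t D (idx D x) ≤ x := by
  cases h : idx D x with
  | zero => rw [t_zero]; exact hx
  | succ m =>
    have hm : m < idx D x := by omega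
    have := Nat.find_min (exists_lt_t D x) hm
    push_neg at this
    exact this

lemma idx_mono : Monotone (idx D) := by
  intro x y hxy
  exact Nat.find_mono fun k hk => lt_of_le_of_lt hxy hk

lemma idx_t (k : ℕ) : idx D (t D k) = k := by
  have h1 : t D k < t D (k + 1) := t_strictMono D (Nat.lt_succ_self k)
  refine le_antisymm (Nat.find_le h1) ?_
  by_contra h
  push_neg at h
  have := Nat.find_spec (exists_lt_t D (t D k))
  have h2 : idx D (t D k) + 1 ≤ k := h
  have := lt_of_lt_of_le (Nat.find_spec (exists_lt_t D (t D k)))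
    (t_monotone D h2)
  exact lt_irrefl _ this

/-- The concave piecewise-linear rescaling function. -/
noncomputable def c (x : ℝ) : ℝ :=
  idx D x + (x - t D (idx D x)) / g D (idx D x)

lemma c_t (k : ℕ) : c D (t D k) = k := by
  simp [c, idx_t]

lemma c_nonneg {x : ℝ} (hx : 0 ≤ x) : 0 ≤ c D x := by
  have h1 := t_idx_le D hx
  have h2 := g_pos D (idx D x)
  have h3 : 0 ≤ (x - t D (idx D x)) / g D (idx D x) :=
    div_nonneg (by linarith) h2.le
  exact add_nonneg (Nat.cast_nonneg _) h3

lemma c_zero : c D 0 = 0 := by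
  have : t D 0 = 0 := rfl
  calc c D 0 = c D (t D 0) := by rw [this]
    _ = 0 := by rw [c_t]; simp

/-- Key two-sided slope estimate, by induction on `idx y - idx x`. -/
lemma slope_bounds : ∀ (m : ℕ) (x y : ℝ), 0 ≤ x → x ≤ y → idx D y = idx D x + m →
    c D y - c D x ≤ (y - x) / g D (idx D x) ∧
    (y - x) / g D (idx D y) ≤ c D y - c D x := by
  intro m
  induction m with
  | zero =>
    intro x y hx hxy hidx
    rw [Nat.add_zero] at hidx
    have hc : c D y - c D x = (y - x) / g D (idx D x) := by
      unfold c
      rw [hidx, ← div_sub_div_same]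
      ring
    rw [hidx]
    constructor <;> rw [hc]
  | succ m ih =>
    intro x y hx hxy hidx
    set k := idx D x with hk
    set w := t D (k + 1) with hw
    have hxw : x < w := lt_t_idx_succ D x
    have hwy : w ≤ y := by
      have h1 : k + 1 ≤ idx D y := by omega
      calc w ≤ t D (idx D y) := t_monotone D h1
        _ ≤ y := t_idx_le D (le_trans hx hxy)
    have hw0 : 0 ≤ w := t_nonneg D (k + 1)
    have hiw : idx D w = k + 1 := idx_t D (k + 1)
    have hidx' : idx D y = idx D w + m := by omega
    obtain ⟨ihA, ihB⟩ := ih w y hw0 hwy hidx'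
    -- c w - c x = (w - x) / g k
    have hgk := g_pos D k
    have hcw : c D w = k + 1 := by
      rw [hw, c_t]; push_cast; ring
    have hcx : c D x = k + (x - t D k) / g D k := rfl
    have hwt : w = t D k + g D k := t_succ D k
    have hstep : c D w - c D x = (w - x) / g D k := by
      rw [hcw, hcx, hwt]
      field_simp
      ring
    have hg1 : g D k ≤ g D (k + 1) := g_le_succ D k
    have hgk1 := g_pos D (k + 1)
    have hgy : g D k ≤ g D (idx D y) := g_monotone D (by omega)
    have hgyp := g_pos D (idx D y)
    constructor
    · -- upper bound
      have h1 : c D y - c D w ≤ (y - w) / g D (k + 1) := by rw [← hiw]; exact ihA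
      have h2 : (y - w) / g D (k + 1) ≤ (y - w) / g D k :=
        div_le_div_of_nonneg_left (by linarith) hgk hg1
      calc c D y - c D x = (c D y - c D w) + (c D w - c D x) := by ring
        _ ≤ (y - w) / g D k + (w - x) / g D k := by
            rw [hstep]
            linarith
        _ = (y - x) / g D k := by rw [← add_div]; ring_nf
    · -- lower bound
      have h1 : (y - w) / g D (idx D y) ≤ c D y - c D w := ihB
      have h2 : (w - x) / g D (idx D y) ≤ (w - x) / g D k :=
        div_le_div_of_nonneg_left (by linarith) hgk hgy
      calc (y - x) / g D (idx D y)
          = (y - w) / g D (idx D y) + (w - x) / g D (idx D y) := by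
            rw [← add_div]; ring_nf
        _ ≤ (c D y - c D w) + (c D w - c D x) := by
            rw [hstep]; linarith
        _ = c D y - c D x := by ring

lemma slope_le {x y : ℝ} (hx : 0 ≤ x) (hxy : x ≤ y) :
    c D y - c D x ≤ (y - x) / g D (idx D x) := by
  have hi : idx D x ≤ idx D y := idx_mono D hxy
  exact (slope_bounds D (idx D y - idx D x) x y hx hxy (by omega)).1

lemma slope_ge {x y : ℝ} (hx : 0 ≤ x) (hxy : x ≤ y) :
    (y - x) / g D (idx D y) ≤ c D y - c D x := by
  have hi : idx D x ≤ idx D y := idx_mono D hxy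
  exact (slope_bounds D (idx D y - idx D x) x y hx hxy (by omega)).2

lemma c_strictMonoOn : StrictMonoOn (c D) (Set.Ici (0 : ℝ)) := by
  intro x hx y _ hxy
  have h := slope_ge D hx hxy.le
  have hp : 0 < (y - x) / g D (idx D y) :=
    div_pos (by linarith) (g_pos D _)
  linarith

lemma c_monotoneOn : MonotoneOn (c D) (Set.Ici (0 : ℝ)) :=
  (c_strictMonoOn D).monotoneOn

lemma c_lipschitzOn : LipschitzOnWith 1 (c D) (Set.Ici (0 : ℝ)) := by
  apply LipschitzOnWith.of_dist_le_mul
  intro x hx y hy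
  simp only [NNReal.coe_one, one_mul]
  rw [Real.dist_eq, Real.dist_eq]
  rcases le_total x y with h | h
  · have h1 := slope_le D hx h
    have h2 := c_monotoneOn D hx hy h
    have hg := one_le_g D (idx D x)
    have h3 : (y - x) / g D (idx D x) ≤ y - x :=
      div_le_self (by linarith) hg
    rw [abs_sub_comm, abs_of_nonneg (by linarith), abs_sub_comm,
      abs_of_nonneg (by linarith)]
    linarith
  · have h1 := slope_le D hy h
    have h2 := c_monotoneOn D hy hx h
    have hg := one_le_g D (idx D y)
    have h3 : (x - y) / g D (idx D y) ≤ x - y :=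
      div_le_self (by linarith) hg
    rw [abs_of_nonneg (by linarith), abs_of_nonneg (by linarith)]
    linarith

lemma c_concaveOn : ConcaveOn ℝ (Set.Ici (0 : ℝ)) (c D) := by
  apply concaveOn_of_slope_anti_adjacent (convex_Ici 0)
  intro x y z hx _ hxy hyz
  have hy : (0 : ℝ) ≤ y := le_trans hx hxy.le
  have hA := slope_le D hy hyz.le
  have hB := slope_ge D hx hxy.le
  have hgy := g_pos D (idx D y)
  have hzy : (0 : ℝ) < z - y := by linarith
  have hyx : (0 : ℝ) < y - x := by linarith
  have s1 : (c D z - c D y) / (z - y) ≤ 1 / g D (idx D y) := by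
    rw [div_le_div_iff₀ hzy hgy]
    have h4 : (c D z - c D y) * g D (idx D y) ≤ z - y := by
      have := (le_div_iff₀ hgy).mp hA
      linarith
    linarith
  have s2 : 1 / g D (idx D y) ≤ (c D y - c D x) / (y - x) := by
    rw [div_le_div_iff₀ hgy hyx]
    have h4 : y - x ≤ (c D y - c D x) * g D (idx D y) := by
      have := (div_le_iff₀ hgy).mp hB
      linarith
    linarith
  linarith

lemma c_subadd {a b : ℝ} (ha : 0 ≤ a) (hb : 0 ≤ b) :
    c D (a + b) ≤ c D a + c D b := by
  rcases eq_or_lt_of_le (add_nonneg ha hb) with h | h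
  · have h0 : a = 0 ∧ b = 0 := by constructor <;> linarith
    rw [h0.1, h0.2]
    simp [c_zero]
  · set s := a + b with hs
    have hK := c_concaveOn D
    have hmem0 : (0 : ℝ) ∈ Set.Ici (0 : ℝ) := Set.mem_Ici.mpr le_rfl
    have hmems : s ∈ Set.Ici (0 : ℝ) := h.le
    have h1 : (a / s) • c D s + (b / s) • c D 0 ≤ c D ((a / s) • s + (b / s) • (0:ℝ)) :=
      hK.2 hmems hmem0 (div_nonneg ha h.le) (div_nonneg hb h.le)
        (by first | (field_simp; linarith) | field_simp)
    have h2 : (b / s) • c D s + (a / s) • c D 0 ≤ c D ((b / s) • s + (a / s) • (0:ℝ)) :=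
      hK.2 hmems hmem0 (div_nonneg hb h.le) (div_nonneg ha h.le)
        (by first | (field_simp; linarith) | field_simp)
    have hc0 : c D 0 = 0 := c_zero D
    have has : (a / s) * s = a := by field_simp
    have hbs : (b / s) * s = b := by field_simp
    simp only [smul_eq_mul, hc0, mul_zero, add_zero] at h1 h2
    rw [has] at h1
    rw [hbs] at h2
    have : (a / s) * c D s + (b / s) * c D s = c D s := by
      field_simp
      ring
    linarith

end Stmt8Aux

theorem stmt_8 (X : Type*) [MetricSpace X] (n : ℕ)
    (hdim : ∃ D : ℝ → ℝ, IsControlFunction (fun x y : X => dist x y) n D) :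
    ∃ c : ℝ → ℝ,
      (∀ r, 0 ≤ r → 0 ≤ c r) ∧
      ConcaveOn ℝ (Set.Ici (0 : ℝ)) c ∧
      StrictMonoOn c (Set.Ici (0 : ℝ)) ∧
      ContinuousOn c (Set.Ici (0 : ℝ)) ∧
      (∀ M : ℝ, ∃ r, 0 ≤ r ∧ M ≤ c r) ∧
      c 0 = 0 ∧
      IsMetric (fun x y : X => c (dist x y)) ∧
      IsControlFunction (fun x y : X => c (dist x y)) n (fun r => r + 2) := by
  obtain ⟨D, hD⟩ := hdim
  open Stmt8Aux in
  refine ⟨Stmt8Aux.c D, fun r hr => Stmt8Aux.c_nonneg D hr, Stmt8Aux.c_concaveOn D,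
    Stmt8Aux.c_strictMonoOn D, (Stmt8Aux.c_lipschitzOn D).continuousOn, ?_,
    Stmt8Aux.c_zero D, ?_, ?_⟩
  · -- unbounded
    intro M
    refine ⟨Stmt8Aux.t D ⌈M⌉₊, Stmt8Aux.t_nonneg D _, ?_⟩
    rw [Stmt8Aux.c_t]
    exact Nat.le_ceil M
  · -- metric
    refine ⟨fun x y => Stmt8Aux.c_nonneg D dist_nonneg, fun x y => ?_, fun x y => by
      dsimp only; rw [dist_comm], fun x y z => ?_⟩
    · constructor
      · intro h
        by_contra hxy
        have hd : 0 < dist x y := dist_pos.mpr hxy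
        have := Stmt8Aux.c_strictMonoOn D (Set.mem_Ici.mpr le_rfl) hd.le hd
        rw [Stmt8Aux.c_zero] at this
        linarith
      · intro h
        subst h
        simp [Stmt8Aux.c_zero]
    · calc Stmt8Aux.c D (dist x z)
          ≤ Stmt8Aux.c D (dist x y + dist y z) :=
            Stmt8Aux.c_monotoneOn D dist_nonneg
              (add_nonneg dist_nonneg dist_nonneg) (dist_triangle x y z)
        _ ≤ Stmt8Aux.c D (dist x y) + Stmt8Aux.c D (dist y z) :=
            Stmt8Aux.c_subadd D dist_nonneg dist_nonneg
  · -- control function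
    intro r hr
    set k := ⌈r⌉₊ with hk
    have hk1 : 1 ≤ k := Nat.ceil_pos.mpr hr
    have htk : (0 : ℝ) < Stmt8Aux.t D k := by
      have := Stmt8Aux.nat_le_t D k
      have : (1 : ℝ) ≤ (k : ℝ) := by exact_mod_cast hk1
      linarith [Stmt8Aux.nat_le_t D k]
    obtain ⟨𝒰, hcov, hdisj, hdiam⟩ := hD (Stmt8Aux.t D k) htk
    refine ⟨𝒰, hcov, ?_, ?_⟩
    · intro i U hU V hV hUV u hu v hv
      have h1 : Stmt8Aux.t D k ≤ dist u v := hdisj i U hU V hV hUV u hu v hv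
      have h2 : Stmt8Aux.c D (Stmt8Aux.t D k) ≤ Stmt8Aux.c D (dist u v) :=
        Stmt8Aux.c_monotoneOn D (Stmt8Aux.t_nonneg D k) dist_nonneg h1
      rw [Stmt8Aux.c_t] at h2
      exact le_trans (Nat.le_ceil r) h2
    · intro i U hU u hu v hv
      have h1 : dist u v ≤ D (Stmt8Aux.t D k) := hdiam i U hU u hu v hv
      have h2 : D (Stmt8Aux.t D k) ≤ Stmt8Aux.t D (k + 1) := by
        obtain ⟨m, hm⟩ : ∃ m, k = m + 1 := ⟨k - 1, by omega⟩
        rw [hm]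
        exact Stmt8Aux.D_t_le D m
      have h3 : dist u v ≤ Stmt8Aux.t D (k + 1) := le_trans h1 h2
      have h4 : Stmt8Aux.c D (dist u v) ≤ Stmt8Aux.c D (Stmt8Aux.t D (k + 1)) :=
        Stmt8Aux.c_monotoneOn D dist_nonneg (Stmt8Aux.t_nonneg D (k + 1)) h3
      rw [Stmt8Aux.c_t] at h4
      have h5 : (⌈r⌉₊ : ℝ) < r + 1 := Nat.ceil_lt_add_one hr.le
      calc Stmt8Aux.c D (dist u v) ≤ (k : ℝ) + 1 := by push_cast at h4; exact h4
        _ ≤ r + 2 := by rw [hk]; push_cast; linarith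
end

section
/- Let (X,d) be a metric space and n a natural number such that (X,d) admits a real-valued n-dimensional control function. Then there exists a function c : [0,∞) → [0,∞) that is concave, strictly increasing, continuous, unbounded, with c(0) = 0, such that the function d''(x,y) = ln(1 + c(d(x,y))) is a metric on X, the affine function D''(r) = r + ln 3 is an n-dimensional control function for (X, d''), and (X, d'') is Gromov hyperbolic: there exists δ ≥ 0 such that d''(x,w) + d''(y,z) ≤ max(d''(x,y) + d''(z,w), d''(x,z) + d''(y,w)) + δ for all x, y, z, w ∈ X. -/
namespace Stmt9Aux

/-- `(sg D k).1` is the anchor sequence `s k`; `(sg D k).2` is the gap `s k - s (k-1)`. -/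
noncomputable def sg (D : ℝ → ℝ) : ℕ → ℝ × ℝ
  | 0 => (0, 1)
  | (k+1) =>
      let p := sg D k
      let g := max p.2 (D p.1 - p.1)
      (p.1 + g, g)

variable (D : ℝ → ℝ)

lemma sg_zero : sg D 0 = (0, 1) := rfl

lemma g_succ (k : ℕ) : (sg D (k+1)).2 = max (sg D k).2 (D (sg D k).1 - (sg D k).1) := rfl

lemma s_succ (k : ℕ) : (sg D (k+1)).1 = (sg D k).1 + (sg D (k+1)).2 := rfl

lemma g_le_g_succ (k : ℕ) : (sg D k).2 ≤ (sg D (k+1)).2 := le_max_left _ _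

lemma g_mono : Monotone (fun k => (sg D k).2) :=
  monotone_nat_of_le_succ (g_le_g_succ D)

lemma one_le_g (k : ℕ) : 1 ≤ (sg D k).2 := by
  have := g_mono D (Nat.zero_le k)
  simpa [sg_zero] using this

lemma g_pos (k : ℕ) : 0 < (sg D k).2 := lt_of_lt_of_le one_pos (one_le_g D k)

lemma s_lt_s_succ (k : ℕ) : (sg D k).1 < (sg D (k+1)).1 := by
  have h := one_le_g D (k+1)
  rw [s_succ]; linarith

lemma s_mono : StrictMono (fun k => (sg D k).1) :=
  strictMono_nat_of_lt_succ (s_lt_s_succ D)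

lemma nat_le_s (k : ℕ) : (k : ℝ) ≤ (sg D k).1 := by
  induction k with
  | zero => simp [sg_zero]
  | succ k ih =>
      have h := one_le_g D (k+1)
      rw [s_succ]; push_cast; linarith

lemma s_nonneg (k : ℕ) : 0 ≤ (sg D k).1 := le_trans (by positivity) (nat_le_s D k)

lemma s_le_mul (k : ℕ) : (sg D k).1 ≤ (k : ℝ) * (sg D (k+1)).2 := by
  induction k with
  | zero => simp [sg_zero]
  | succ k ih =>
      have hm := g_le_g_succ D (k+1)
      have h1 := one_le_g D (k+1)
      rw [s_succ]
      push_cast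
      nlinarith [g_le_g_succ D k]

lemma D_s_le (k : ℕ) : D (sg D k).1 ≤ (sg D (k+1)).1 := by
  have : D (sg D k).1 - (sg D k).1 ≤ (sg D (k+1)).2 := le_max_right _ _
  rw [s_succ]; linarith

end Stmt9Aux

namespace Stmt9Aux

variable (D : ℝ → ℝ)

/-- The affine piece through `(s k, k)` with slope `1/g (k+1)`. -/
noncomputable def ell (k : ℕ) (x : ℝ) : ℝ :=
  (k : ℝ) + (x - (sg D k).1) / (sg D (k+1)).2

/-- The taming function: infimum of the affine pieces. -/
noncomputable def cfun (x : ℝ) : ℝ := ⨅ k, ell D k x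

lemma ell_nonneg {k : ℕ} {x : ℝ} (hx : 0 ≤ x) : 0 ≤ ell D k x := by
  unfold ell
  have hg := g_pos D (k+1)
  have hs := s_le_mul D k
  have h : -(k:ℝ) ≤ (x - (sg D k).1) / (sg D (k+1)).2 := by
    rw [le_div_iff₀ hg]; nlinarith
  linarith

lemma ell_lb (k : ℕ) (x : ℝ) : min x 0 ≤ ell D k x := by
  rcases le_total 0 x with hx | hx
  · exact le_trans (min_le_right _ _) (ell_nonneg D hx)
  · refine le_trans (min_le_left _ _) ?_
    unfold ell
    have hg := g_pos D (k+1)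
    have h1 := one_le_g D (k+1)
    have hs := s_le_mul D k
    have h : x - (k:ℝ) ≤ (x - (sg D k).1) / (sg D (k+1)).2 := by
      rw [le_div_iff₀ hg]; nlinarith
    linarith

lemma ell_bdd (x : ℝ) : BddBelow (Set.range fun k => ell D k x) := by
  refine ⟨min x 0, ?_⟩
  rintro y ⟨k, rfl⟩
  exact ell_lb D k x

lemma cfun_le (k : ℕ) (x : ℝ) : cfun D x ≤ ell D k x := ciInf_le (ell_bdd D x) k

lemma cfun_nonneg {x : ℝ} (hx : 0 ≤ x) : 0 ≤ cfun D x :=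
  le_ciInf fun k => ell_nonneg D hx

/-- The affine pieces decrease to the right of the joints. -/
lemma ell_le_of_ge {j k : ℕ} (hjk : j ≤ k) {x : ℝ} (hx : (sg D k).1 ≤ x) :
    ell D k x ≤ ell D j x := by
  induction k with
  | zero => interval_cases j; exact le_rfl
  | succ k ih =>
      rcases Nat.lt_or_ge j (k+1) with hj | hj
      · have hj' : j ≤ k := Nat.lt_succ_iff.mp hj
        have hx' : (sg D k).1 ≤ x := le_trans (s_lt_s_succ D k).le hx
        refine le_trans ?_ (ih hj' hx')
        -- ell (k+1) x ≤ ell k x for x ≥ s (k+1)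
        unfold ell
        have hg1 := g_pos D (k+1)
        have hg2 := g_pos D (k+2)
        have hmono := g_le_g_succ D (k+1)
        have hkey : (x - (sg D (k+1)).1) / (sg D (k+2)).2
            ≤ (x - (sg D (k+1)).1) / (sg D (k+1)).2 := by
          apply div_le_div_of_nonneg_left ?_ hg1 hmono |>.trans_eq rfl
          · linarith
        have hs : (sg D (k+1)).1 = (sg D k).1 + (sg D (k+1)).2 := s_succ D k
        have : (x - (sg D (k+1)).1) / (sg D (k+1)).2 + 1 = (x - (sg D k).1) / (sg D (k+1)).2 := by
          field_simp [hs]; rw [hs]; ring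
        push_cast
        linarith
      · have : j = k+1 := le_antisymm (by omega) hj
        subst this; exact le_rfl

/-- The affine pieces decrease to the left of the joints. -/
lemma ell_le_of_le {j k : ℕ} (hjk : k ≤ j) {x : ℝ} (hx : x ≤ (sg D (k+1)).1) :
    ell D k x ≤ ell D j x := by
  induction j with
  | zero => interval_cases k; exact le_rfl
  | succ j ih =>
      rcases Nat.lt_or_ge k (j+1) with hk | hk
      · have hk' : k ≤ j := Nat.lt_succ_iff.mp hk
        refine le_trans (ih hk') ?_
        -- ell j x ≤ ell (j+1) x for x ≤ s (j+1)
        have hx' : x ≤ (sg D (j+1)).1 := by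
          rcases Nat.lt_or_ge k j with h | h
          · exact le_trans hx (s_mono D (by omega)).le
          · have : k = j := le_antisymm hk' h
            subst this; exact hx
        unfold ell
        have hg1 := g_pos D (j+1)
        have hg2 := g_pos D (j+2)
        have hmono := g_le_g_succ D (j+1)
        have hkey : (x - (sg D (j+1)).1) / (sg D (j+1)).2
            ≤ (x - (sg D (j+1)).1) / (sg D (j+2)).2 := by
          rw [div_le_div_iff₀ hg1 hg2]
          nlinarith
        have hs : (sg D (j+1)).1 = (sg D j).1 + (sg D (j+1)).2 := s_succ D j
        have : (x - (sg D (j+1)).1) / (sg D (j+1)).2 + 1 = (x - (sg D j).1) / (sg D (j+1)).2 := by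
          field_simp [hs]; rw [hs]; ring
        push_cast
        linarith
      · have : k = j+1 := by omega
        subst this; exact le_rfl

lemma cfun_eq {k : ℕ} {x : ℝ} (h1 : (sg D k).1 ≤ x) (h2 : x ≤ (sg D (k+1)).1) :
    cfun D x = ell D k x := by
  refine le_antisymm (cfun_le D k x) (le_ciInf fun j => ?_)
  rcases le_total j k with hj | hj
  · exact ell_le_of_ge D hj h1
  · exact ell_le_of_le D hj h2

lemma cfun_s (k : ℕ) : cfun D (sg D k).1 = k := by
  rw [cfun_eq D le_rfl (s_lt_s_succ D k).le]
  unfold ell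
  simp

lemma cfun_zero : cfun D 0 = 0 := by
  have := cfun_s D 0
  simpa [sg_zero] using this

lemma exists_interval {x : ℝ} (hx : 0 ≤ x) :
    ∃ k, (sg D k).1 ≤ x ∧ x ≤ (sg D (k+1)).1 := by
  have hex : ∃ k : ℕ, x ≤ (sg D k).1 := by
    obtain ⟨m, hm⟩ := exists_nat_ge x
    exact ⟨m, le_trans hm (nat_le_s D m)⟩
  classical
  let k := Nat.find hex
  have hk : x ≤ (sg D k).1 := Nat.find_spec hex
  rcases Nat.eq_zero_or_pos k with h0 | hpos
  · refine ⟨0, by simpa [sg_zero] using hx, ?_⟩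
    rw [h0] at hk
    exact le_trans hk (s_mono D (by omega)).le
  · obtain ⟨m, hm⟩ : ∃ m, k = m + 1 := ⟨k - 1, by omega⟩
    refine ⟨m, ?_, by rw [hm] at hk; exact hk⟩
    have := Nat.find_min hex (m := m) (by omega)
    push_neg at this
    exact this.le

lemma cfun_strictMonoOn : StrictMonoOn (cfun D) (Set.Ici (0:ℝ)) := by
  intro x hx y hy hxy
  obtain ⟨k, h1, h2⟩ := exists_interval D (Set.mem_Ici.mp hy)
  rw [cfun_eq D h1 h2]
  refine lt_of_le_of_lt (cfun_le D k x) ?_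
  unfold ell
  have hg := g_pos D (k+1)
  have : (x - (sg D k).1) / (sg D (k+1)).2 < (y - (sg D k).1) / (sg D (k+1)).2 := by
    gcongr <;> linarith
  linarith

lemma ell_affine (k : ℕ) {a b : ℝ} (hab : a + b = 1) (x y : ℝ) :
    ell D k (a*x + b*y) = a * ell D k x + b * ell D k y := by
  have hb' : b = 1 - a := by linarith
  subst hb'
  have hg := (g_pos D (k+1)).ne'
  unfold ell
  field_simp
  ring

lemma cfun_concave : ConcaveOn ℝ (Set.Ici (0:ℝ)) (cfun D) := by
  refine ⟨convex_Ici 0, fun x _ y _ a b ha hb hab => ?_⟩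
  refine le_ciInf fun k => ?_
  have h1 : cfun D x ≤ ell D k x := cfun_le D k x
  have h2 : cfun D y ≤ ell D k y := cfun_le D k y
  have := ell_affine D k hab x y
  simp only [smul_eq_mul]
  rw [this]
  have := mul_le_mul_of_nonneg_left h1 ha
  have := mul_le_mul_of_nonneg_left h2 hb
  linarith

lemma cfun_lip_aux (x y : ℝ) : cfun D x ≤ cfun D y + |x - y| := by
  have key : cfun D x - |x - y| ≤ cfun D y := by
    refine le_ciInf fun k => ?_
    have h1 : cfun D x ≤ ell D k x := cfun_le D k x
    have hg := g_pos D (k+1)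
    have hg1 := one_le_g D (k+1)
    have h2 : ell D k x - ell D k y ≤ |x - y| := by
      unfold ell
      have : (x - y) / (sg D (k+1)).2 ≤ |x - y| := by
        rw [div_le_iff₀ hg]
        nlinarith [le_abs_self (x - y), abs_nonneg (x - y)]
      have heq : ((k:ℝ) + (x - (sg D k).1) / (sg D (k+1)).2) -
          ((k:ℝ) + (y - (sg D k).1) / (sg D (k+1)).2) = (x - y) / (sg D (k+1)).2 := by
        field_simp
        ring
      linarith [heq.le, heq.ge]
    linarith
  linarith

lemma cfun_abs_le (x y : ℝ) : |cfun D x - cfun D y| ≤ |x - y| := by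
  rw [abs_le]
  constructor
  · have := cfun_lip_aux D y x
    rw [abs_sub_comm] at this
    linarith
  · have := cfun_lip_aux D x y
    linarith

lemma cfun_continuous : Continuous (cfun D) := by
  have : LipschitzWith 1 (cfun D) := by
    refine LipschitzWith.of_dist_le_mul fun x y => ?_
    rw [Real.dist_eq, Real.dist_eq]
    simpa using cfun_abs_le D x y
  exact this.continuous

lemma cfun_monotoneOn : MonotoneOn (cfun D) (Set.Ici (0:ℝ)) :=
  (cfun_strictMonoOn D).monotoneOn

lemma cfun_subadd {a b : ℝ} (ha : 0 ≤ a) (hb : 0 ≤ b) :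
    cfun D (a + b) ≤ cfun D a + cfun D b := by
  rcases eq_or_lt_of_le (by linarith : (0:ℝ) ≤ a + b) with h0 | hpos
  · have ha0 : a = 0 := by linarith
    have hb0 : b = 0 := by linarith
    simp [ha0, hb0, cfun_zero]
  · have hne : a + b ≠ 0 := ne_of_gt hpos
    have hconc := cfun_concave D
    have key : ∀ u : ℝ, 0 ≤ u → u ≤ a + b →
        (u / (a+b)) * cfun D (a+b) ≤ cfun D u := by
      intro u hu hule
      have h1 : (1 - u/(a+b)) ≥ 0 := by
        rw [ge_iff_le, sub_nonneg, div_le_one hpos]; exact hule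
      have h2 : u/(a+b) ≥ 0 := by positivity
      have := hconc.2 (Set.mem_Ici.mpr le_rfl) (Set.mem_Ici.mpr (le_of_lt hpos))
        h1 h2 (by ring)
      simp only [smul_eq_mul, mul_zero, zero_add] at this
      rw [cfun_zero] at this
      have harg : (u/(a+b)) * (a+b) = u := by field_simp
      rw [harg] at this
      linarith
    have hka := key a ha (by linarith)
    have hkb := key b hb (by linarith)
    have : (a/(a+b)) * cfun D (a+b) + (b/(a+b)) * cfun D (a+b) = cfun D (a+b) := by
      field_simp
    linarith

end Stmt9Aux
namespace Stmt9Aux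

lemma key_core {p q s t a b : ℝ} (hp : 0 ≤ p) (hq0 : 0 ≤ q) (hs : 0 ≤ s) (ht : 0 ≤ t)
    (ha0 : 0 ≤ a) (hb0 : 0 ≤ b)
    (ha1 : a ≤ p + t) (ha2 : a ≤ s + q) (hb2 : b ≤ t + q)
    (hM : (1+s)*(1+t) ≤ (1+p)*(1+q)) (hqp : q ≤ p) (hts : t ≤ s) :
    (1+a)*(1+b) ≤ 4*((1+p)*(1+q)) := by
  have htp : t ≤ p := by nlinarith
  rcases le_total t q with h | h
  · -- use a ≤ p + t, b ≤ t + q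
    have hab : (1+a)*(1+b) ≤ (1+(p+t))*(1+(t+q)) :=
      mul_le_mul (by linarith) (by linarith) (by linarith) (by linarith)
    nlinarith
  · -- use a ≤ s + q, b ≤ t + q
    have hab : (1+a)*(1+b) ≤ (1+(s+q))*(1+(t+q)) :=
      mul_le_mul (by linarith) (by linarith) (by linarith) (by linarith)
    nlinarith [mul_nonneg (sub_nonneg.2 htp) (sub_nonneg.2 h)]

lemma key4 {p q s t a b : ℝ} (hp : 0 ≤ p) (hq0 : 0 ≤ q) (hs : 0 ≤ s) (ht : 0 ≤ t)
    (ha0 : 0 ≤ a) (hb0 : 0 ≤ b)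
    (ha1 : a ≤ p + t) (ha2 : a ≤ s + q) (hb1 : b ≤ p + s) (hb2 : b ≤ t + q) :
    (1+a)*(1+b) ≤ 4 * max ((1+p)*(1+q)) ((1+s)*(1+t)) := by
  rcases le_total ((1+s)*(1+t)) ((1+p)*(1+q)) with hM | hM
  · rw [max_eq_left hM]
    rcases le_total q p with hqp | hqp
    · rcases le_total t s with hts | hts
      · exact key_core hp hq0 hs ht ha0 hb0 ha1 ha2 hb2 hM hqp hts
      · have := key_core (p:=p) (q:=q) (s:=t) (t:=s) (a:=b) (b:=a) hp hq0 ht hs hb0 ha0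
          (by linarith) (by linarith) (by linarith) (by nlinarith) hqp hts
        nlinarith
    · rcases le_total s t with hst | hst
      · have := key_core (p:=q) (q:=p) (s:=t) (t:=s) (a:=a) (b:=b) hq0 hp ht hs ha0 hb0
          (by linarith) (by linarith) (by linarith) (by nlinarith) hqp hst
        nlinarith
      · have := key_core (p:=q) (q:=p) (s:=s) (t:=t) (a:=b) (b:=a) hq0 hp hs ht hb0 ha0
          (by linarith) (by linarith) (by linarith) (by nlinarith) hqp hst
        nlinarith
  · rw [max_eq_right hM]
    rcases le_total t s with hts | hts
    · rcases le_total q p with hqp | hqp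
      · have := key_core (p:=s) (q:=t) (s:=p) (t:=q) (a:=a) (b:=b) hs ht hp hq0 ha0 hb0
          (by linarith) (by linarith) (by linarith) (by nlinarith) hts hqp
        nlinarith
      · have := key_core (p:=s) (q:=t) (s:=q) (t:=p) (a:=b) (b:=a) hs ht hq0 hp hb0 ha0
          (by linarith) (by linarith) (by linarith) (by nlinarith) hts hqp
        nlinarith
    · rcases le_total p q with hpq | hpq
      · have := key_core (p:=t) (q:=s) (s:=q) (t:=p) (a:=a) (b:=b) ht hs hq0 hp ha0 hb0
          (by linarith) (by linarith) (by linarith) (by nlinarith) hts hpq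
        nlinarith
      · have := key_core (p:=t) (q:=s) (s:=p) (t:=q) (a:=b) (b:=a) ht hs hp hq0 hb0 ha0
          (by linarith) (by linarith) (by linarith) (by nlinarith) hts hpq
        nlinarith

end Stmt9Aux

namespace Stmt9Aux

variable (D : ℝ → ℝ)

lemma cfun_log_tri {X : Type*} [MetricSpace X] (a b c : X) :
    cfun D (dist a c) ≤ cfun D (dist a b) + cfun D (dist b c) :=
  le_trans
    (cfun_monotoneOn D (Set.mem_Ici.mpr dist_nonneg)
      (Set.mem_Ici.mpr (add_nonneg dist_nonneg dist_nonneg)) (dist_triangle a b c))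
    (cfun_subadd D dist_nonneg dist_nonneg)

end Stmt9Aux
/-- `d` satisfies the Gromov four-point hyperbolicity condition with some
constant `δ ≥ 0`. -/
def IsGromovHyperbolic {X : Type*} (d : X → X → ℝ) : Prop :=
  ∃ δ : ℝ, 0 ≤ δ ∧ ∀ x y z w : X,
    d x w + d y z ≤ max (d x y + d z w) (d x z + d y w) + δ

open Stmt9Aux in
theorem stmt_9 (X : Type*) [MetricSpace X] (n : ℕ)
    (hdim : ∃ D : ℝ → ℝ, IsControlFunction (fun x y : X => dist x y) n D) :
    ∃ c : ℝ → ℝ,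
      (∀ r, 0 ≤ r → 0 ≤ c r) ∧
      ConcaveOn ℝ (Set.Ici (0 : ℝ)) c ∧
      StrictMonoOn c (Set.Ici (0 : ℝ)) ∧
      ContinuousOn c (Set.Ici (0 : ℝ)) ∧
      (∀ M : ℝ, ∃ r, 0 ≤ r ∧ M ≤ c r) ∧
      c 0 = 0 ∧
      IsMetric (fun x y : X => Real.log (1 + c (dist x y))) ∧
      IsControlFunction (fun x y : X => Real.log (1 + c (dist x y))) n
        (fun r => r + Real.log 3) ∧
      IsGromovHyperbolic (fun x y : X => Real.log (1 + c (dist x y))) := by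
  obtain ⟨D, hD⟩ := hdim
  refine ⟨cfun D, fun r hr => cfun_nonneg D hr, cfun_concave D, cfun_strictMonoOn D,
    (cfun_continuous D).continuousOn, ?_, cfun_zero D, ?_, ?_, ?_⟩
  · -- unbounded
    intro M
    refine ⟨(sg D ⌈M⌉₊).1, s_nonneg D _, ?_⟩
    rw [cfun_s D]
    exact le_trans (Nat.le_ceil M) le_rfl
  · -- IsMetric
    have pos : ∀ x y : X, (0:ℝ) < 1 + cfun D (dist x y) := fun x y => by
      linarith [cfun_nonneg D (dist_nonneg (x := x) (y := y))]
    refine ⟨fun x y => Real.log_nonneg (by linarith [cfun_nonneg D (dist_nonneg (x := x) (y := y))]),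
      fun x y => ?_, fun x y => by simp [dist_comm], fun x y z => ?_⟩
    · constructor
      · intro h
        have hc := cfun_nonneg D (dist_nonneg (x := x) (y := y))
        rcases Real.log_eq_zero.mp h with h1 | h1 | h1
        · linarith [pos x y]
        · have hc0 : cfun D (dist x y) = 0 := by linarith
          have := (cfun_strictMonoOn D).injOn (Set.mem_Ici.mpr dist_nonneg)
            (Set.mem_Ici.mpr le_rfl) (by rw [hc0, cfun_zero D])
          exact dist_eq_zero.mp this
        · linarith [pos x y]
      · intro h
        subst h
        simp [cfun_zero D]
    · -- triangle
      have h1 := pos x y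
      have h2 := pos y z
      have h3 := cfun_log_tri D x y z
      have hprod : (1 : ℝ) + cfun D (dist x z) ≤
          (1 + cfun D (dist x y)) * (1 + cfun D (dist y z)) := by
        have := cfun_nonneg D (dist_nonneg (x := x) (y := y))
        have := cfun_nonneg D (dist_nonneg (x := y) (y := z))
        nlinarith
      calc Real.log (1 + cfun D (dist x z))
          ≤ Real.log ((1 + cfun D (dist x y)) * (1 + cfun D (dist y z))) :=
            Real.log_le_log (pos x z) hprod
        _ = _ := Real.log_mul (ne_of_gt h1) (ne_of_gt h2)
  · -- IsControlFunction
    intro r hr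
    have hexp : (1:ℝ) < Real.exp r := Real.one_lt_exp_iff.mpr hr
    -- find t > 0 with cfun D t = exp r - 1
    set E := Real.exp r - 1 with hE
    have hEpos : 0 < E := by simp [hE]; linarith
    obtain ⟨K, hK⟩ := exists_nat_ge E
    have hsK : 0 ≤ (sg D K).1 := s_nonneg D K
    have hIcc : E ∈ Set.Icc (cfun D 0) (cfun D (sg D K).1) := by
      rw [cfun_zero D, cfun_s D]
      exact ⟨hEpos.le, hK⟩
    obtain ⟨t, htmem, htval⟩ := intermediate_value_Icc hsK
      ((cfun_continuous D).continuousOn) hIcc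
    have ht0 : 0 < t := by
      rcases lt_or_eq_of_le htmem.1 with h | h
      · exact h
      · exfalso
        rw [← h, cfun_zero D] at htval
        linarith
    -- minimal k with t ≤ s k
    have hex : ∃ k : ℕ, t ≤ (sg D k).1 := ⟨K, htmem.2⟩
    classical
    set k₀ := Nat.find hex with hk₀
    have hspec : t ≤ (sg D k₀).1 := Nat.find_spec hex
    have hk₀pos : 0 < k₀ := by
      rcases Nat.eq_zero_or_pos k₀ with h | h
      · exfalso
        have := hspec
        rw [h] at this
        have h0 : (sg D 0).1 = 0 := by rw [sg_zero]
        rw [h0] at this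
        linarith
      · exact h
    obtain ⟨m, hm⟩ : ∃ m, k₀ = m + 1 := ⟨k₀ - 1, by omega⟩
    have hmlt : (sg D m).1 < t := by
      by_contra hcon
      push_neg at hcon
      exact Nat.find_min hex (m := m) (by omega) hcon
    have hr₀pos : 0 < (sg D k₀).1 := lt_of_lt_of_le ht0 hspec
    obtain ⟨𝒰, hcov, hdisj, hdiam⟩ := hD (sg D k₀).1 hr₀pos
    refine ⟨𝒰, hcov, ?_, ?_⟩
    · intro i U hU V hV hne u hu v hv
      have hd : (sg D k₀).1 ≤ dist u v := hdisj i U hU V hV hne u hu v hv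
      have htd : t ≤ dist u v := le_trans hspec hd
      have hmon : cfun D t ≤ cfun D (dist u v) :=
        cfun_monotoneOn D (Set.mem_Ici.mpr ht0.le) (Set.mem_Ici.mpr dist_nonneg) htd
      rw [htval] at hmon
      have : Real.exp r ≤ 1 + cfun D (dist u v) := by
        simp only [hE] at hmon
        linarith
      calc r = Real.log (Real.exp r) := (Real.log_exp r).symm
        _ ≤ Real.log (1 + cfun D (dist u v)) :=
            Real.log_le_log (Real.exp_pos r) this
    · intro i U hU u hu v hv
      have hd : dist u v ≤ D (sg D k₀).1 := hdiam i U hU u hu v hv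
      have hd2 : dist u v ≤ (sg D (k₀+1)).1 := le_trans hd (D_s_le D k₀)
      have hmon : cfun D (dist u v) ≤ cfun D (sg D (k₀+1)).1 :=
        cfun_monotoneOn D (Set.mem_Ici.mpr dist_nonneg)
          (Set.mem_Ici.mpr (s_nonneg D _)) hd2
      rw [cfun_s D] at hmon
      -- cfun D t > m
      have hsm : cfun D (sg D m).1 < cfun D t :=
        cfun_strictMonoOn D (Set.mem_Ici.mpr (s_nonneg D m)) (Set.mem_Ici.mpr ht0.le) hmlt
      rw [cfun_s D, htval] at hsm
      have hE3 : 1 + cfun D (dist u v) ≤ 3 * Real.exp r := by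
        have h1 : (m : ℝ) < Real.exp r - 1 := by simpa [hE] using hsm
        have h2 : cfun D (dist u v) ≤ (k₀ : ℝ) + 1 := by push_cast at hmon ⊢; linarith
        have h3 : (k₀ : ℝ) = (m : ℝ) + 1 := by rw [hm]; push_cast; ring
        have hm0 : (0:ℝ) ≤ (m : ℝ) := Nat.cast_nonneg m
        linarith
      have hpos : (0:ℝ) < 1 + cfun D (dist u v) := by
        linarith [cfun_nonneg D (dist_nonneg (x := u) (y := v))]
      calc Real.log (1 + cfun D (dist u v)) ≤ Real.log (3 * Real.exp r) :=
            Real.log_le_log hpos hE3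
        _ = r + Real.log 3 := by
            rw [Real.log_mul (by norm_num) (ne_of_gt (Real.exp_pos r)), Real.log_exp]
            ring
  · -- IsGromovHyperbolic
    refine ⟨Real.log 4, Real.log_nonneg (by norm_num), fun x y z w => ?_⟩
    set p := cfun D (dist x y) with hp'
    set q := cfun D (dist z w) with hq'
    set s := cfun D (dist x z) with hs'
    set t := cfun D (dist y w) with ht'
    set a := cfun D (dist x w) with ha'
    set b := cfun D (dist y z) with hb'
    have hp : 0 ≤ p := cfun_nonneg D dist_nonneg
    have hq : 0 ≤ q := cfun_nonneg D dist_nonneg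
    have hs : 0 ≤ s := cfun_nonneg D dist_nonneg
    have ht : 0 ≤ t := cfun_nonneg D dist_nonneg
    have ha : 0 ≤ a := cfun_nonneg D dist_nonneg
    have hb : 0 ≤ b := cfun_nonneg D dist_nonneg
    have ha1 : a ≤ p + t := cfun_log_tri D x y w
    have ha2 : a ≤ s + q := by
      have := cfun_log_tri D x z w
      simpa [dist_comm] using this
    have hb1 : b ≤ p + s := by
      have := cfun_log_tri D y x z
      simpa [dist_comm, add_comm] using this
    have hb2 : b ≤ t + q := by
      have := cfun_log_tri D y w z
      simpa [dist_comm] using this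
    have hkey := key4 hp hq hs ht ha hb ha1 ha2 hb1 hb2
    have p1 : (0:ℝ) < 1 + p := by linarith
    have q1 : (0:ℝ) < 1 + q := by linarith
    have s1 : (0:ℝ) < 1 + s := by linarith
    have t1 : (0:ℝ) < 1 + t := by linarith
    have a1 : (0:ℝ) < 1 + a := by linarith
    have b1 : (0:ℝ) < 1 + b := by linarith
    have hmaxpos : (0:ℝ) < max ((1+p)*(1+q)) ((1+s)*(1+t)) :=
      lt_max_of_lt_left (by positivity)
    have step1 : Real.log (1+a) + Real.log (1+b)
        = Real.log ((1+a)*(1+b)) := (Real.log_mul (ne_of_gt a1) (ne_of_gt b1)).symm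
    rw [step1]
    have step2 : Real.log ((1+a)*(1+b)) ≤
        Real.log (4 * max ((1+p)*(1+q)) ((1+s)*(1+t))) :=
      Real.log_le_log (by positivity) hkey
    have step3 : Real.log (4 * max ((1+p)*(1+q)) ((1+s)*(1+t)))
        = Real.log (max ((1+p)*(1+q)) ((1+s)*(1+t))) + Real.log 4 := by
      rw [Real.log_mul (by norm_num) (ne_of_gt hmaxpos)]; ring
    have step4 : Real.log (max ((1+p)*(1+q)) ((1+s)*(1+t)))
        = max (Real.log (1+p) + Real.log (1+q)) (Real.log (1+s) + Real.log (1+t)) := by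
      rcases le_total ((1+s)*(1+t)) ((1+p)*(1+q)) with h | h
      · rw [max_eq_left h, Real.log_mul (ne_of_gt p1) (ne_of_gt q1),
          max_eq_left]
        rw [← Real.log_mul (ne_of_gt p1) (ne_of_gt q1),
          ← Real.log_mul (ne_of_gt s1) (ne_of_gt t1)]
        exact Real.log_le_log (by positivity) h
      · rw [max_eq_right h, Real.log_mul (ne_of_gt s1) (ne_of_gt t1),
          max_eq_right]
        rw [← Real.log_mul (ne_of_gt p1) (ne_of_gt q1),
          ← Real.log_mul (ne_of_gt s1) (ne_of_gt t1)]
        exact Real.log_le_log (by positivity) h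
    rw [step3, step4] at step2
    exact step2
end

section
/- Let l ∈ ℕ, let (X₁,d₁), …, (X_l,d_l) be metric spaces, let X = X₁ × ⋯ × X_l with the sup metric d(x,y) = maxᵢ dᵢ(xᵢ,yᵢ), let n, n₁, …, n_l be natural numbers, and suppose (X,d) admits a real-valued n-dimensional control function and each (Xᵢ,dᵢ) admits a real-valued nᵢ-dimensional control function. Then there exists a single function c : [0,∞) → [0,∞), concave, strictly increasing, continuous, unbounded, with c(0) = 0, such that: d' = c ∘ d and dᵢ' = c ∘ dᵢ are metrics; d' equals the sup metric of the metrics dᵢ'; the affine function r ↦ r + 2 is an n-dimensional control function for (X, d'); and for each i the affine function r ↦ r + 2 is an nᵢ-dimensional control function for (Xᵢ, dᵢ'). -/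
noncomputable def Baux (F : ℕ → ℝ) (s : ℝ) : ℝ :=
  (((Finset.range (⌈s⌉₊ + 1)).sup fun j => ⌈F j⌉₊ : ℕ) : ℝ)

lemma le_Baux (F : ℕ → ℝ) (s : ℝ) (m : ℕ) (hm : m ≤ ⌈s⌉₊) : F m ≤ Baux F s := by
  calc F m ≤ (⌈F m⌉₊ : ℝ) := Nat.le_ceil _
    _ ≤ _ := by
      unfold Baux
      exact_mod_cast Finset.le_sup (f := fun j => ⌈F j⌉₊)
        (Finset.mem_range.mpr (Nat.lt_succ_of_le hm))

noncomputable def Aaux (F : ℕ → ℝ) : ℕ → ℝ × ℝ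
  | 0 => (1, 1)
  | k+1 =>
    let p := Aaux F k
    let g := max (2 * p.1) (Baux F p.2)
    (g, p.2 + g)

noncomputable def gg (F : ℕ → ℝ) (k : ℕ) : ℝ := (Aaux F k).1

noncomputable def tt (F : ℕ → ℝ) : ℕ → ℝ
  | 0 => 0
  | k+1 => (Aaux F k).2

lemma gg_succ (F : ℕ → ℝ) (k : ℕ) :
    gg F (k+1) = max (2 * gg F k) (Baux F (tt F (k+1))) := rfl

lemma tt_succ (F : ℕ → ℝ) (k : ℕ) : tt F (k+1) = tt F k + gg F k := by
  cases k with
  | zero => simp [tt, gg, Aaux]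
  | succ k => simp only [tt, gg, Aaux]

lemma one_le_gg (F : ℕ → ℝ) (k : ℕ) : 1 ≤ gg F k := by
  induction k with
  | zero => simp [gg, Aaux]
  | succ k ih =>
    rw [gg_succ]
    have : (1:ℝ) ≤ 2 * gg F k := by linarith
    exact le_trans this (le_max_left _ _)

lemma gg_pos (F : ℕ → ℝ) (k : ℕ) : 0 < gg F k := lt_of_lt_of_le one_pos (one_le_gg F k)

lemma gg_mono (F : ℕ → ℝ) : Monotone (gg F) := by
  apply monotone_nat_of_le_succ
  intro k
  rw [gg_succ]
  have h := one_le_gg F k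
  exact le_trans (by linarith) (le_max_left _ _)

lemma tt_le_gg (F : ℕ → ℝ) (k : ℕ) : tt F k ≤ gg F k := by
  induction k with
  | zero => simp [tt]; have := one_le_gg F 0; linarith
  | succ k ih =>
    rw [tt_succ, gg_succ]
    have h := one_le_gg F k
    exact le_trans (by linarith) (le_max_left _ _)

lemma k_le_tt (F : ℕ → ℝ) (k : ℕ) : (k : ℝ) ≤ tt F k := by
  induction k with
  | zero => simp [tt]
  | succ k ih =>
    rw [tt_succ]
    have := one_le_gg F k
    push_cast
    linarith

lemma tt_nonneg (F : ℕ → ℝ) (k : ℕ) : 0 ≤ tt F k :=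
  le_trans (by positivity) (k_le_tt F k)

lemma Baux_le_gg (F : ℕ → ℝ) (k : ℕ) : Baux F (tt F (k+1)) ≤ gg F (k+1) := by
  rw [gg_succ]; exact le_max_right _ _

noncomputable def LL (F : ℕ → ℝ) (k : ℕ) (r : ℝ) : ℝ :=
  (k : ℝ) + (r - tt F k) / gg F k

noncomputable def cc (F : ℕ → ℝ) (r : ℝ) : ℝ := ⨅ k, LL F k r

lemma LL_zero (F : ℕ → ℝ) (r : ℝ) : LL F 0 r = r := by
  simp [LL, tt, gg, Aaux]

lemma LL_ge (F : ℕ → ℝ) (k : ℕ) {r : ℝ} (hr : 0 ≤ r) : (k : ℝ) - 1 ≤ LL F k r := by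
  have hg := gg_pos F k
  have h1 : (-1 : ℝ) ≤ (r - tt F k) / gg F k := by
    rw [le_div_iff₀ hg]
    have := tt_le_gg F k
    linarith
  unfold LL; linarith

lemma LL_nonneg (F : ℕ → ℝ) (k : ℕ) {r : ℝ} (hr : 0 ≤ r) : 0 ≤ LL F k r := by
  cases k with
  | zero => rw [LL_zero]; exact hr
  | succ k =>
    have := LL_ge F (k+1) hr
    push_cast at this
    linarith

lemma bdd_LL (F : ℕ → ℝ) {r : ℝ} (hr : 0 ≤ r) :
    BddBelow (Set.range fun k => LL F k r) := by
  refine ⟨0, ?_⟩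
  rintro _ ⟨k, rfl⟩
  exact LL_nonneg F k hr

lemma cc_le (F : ℕ → ℝ) {r : ℝ} (hr : 0 ≤ r) (k : ℕ) : cc F r ≤ LL F k r :=
  ciInf_le (bdd_LL F hr) k

lemma le_cc (F : ℕ → ℝ) {r a : ℝ} (h : ∀ k, a ≤ LL F k r) : a ≤ cc F r :=
  le_ciInf h

lemma cc_nonneg (F : ℕ → ℝ) {r : ℝ} (hr : 0 ≤ r) : 0 ≤ cc F r :=
  le_cc F fun k => LL_nonneg F k hr

lemma tt_sub (F : ℕ → ℝ) {j k : ℕ} (h : j ≤ k) :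
    ((k : ℝ) - j) * gg F j ≤ tt F k - tt F j := by
  induction k, h using Nat.le_induction with
  | base => simp
  | succ k hk ih =>
    rw [tt_succ]
    have h2 : gg F j ≤ gg F k := gg_mono F hk
    push_cast
    linarith

lemma LL_tt_ge (F : ℕ → ℝ) (j k : ℕ) : (k : ℝ) ≤ LL F j (tt F k) := by
  have hgj := gg_pos F j
  rcases le_or_gt j k with h | h
  · have h1 := tt_sub F h
    have h2 : ((k : ℝ) - j) ≤ (tt F k - tt F j) / gg F j := by
      rw [le_div_iff₀ hgj]; linarith
    unfold LL; linarith
  · have h1 : (k : ℝ) + 1 ≤ j := by exact_mod_cast h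
    have h2 : (-1 : ℝ) ≤ (tt F k - tt F j) / gg F j := by
      rw [le_div_iff₀ hgj]
      have := tt_le_gg F j
      have := tt_nonneg F k
      linarith
    unfold LL; linarith

lemma cc_tt (F : ℕ → ℝ) (k : ℕ) : cc F (tt F k) = k := by
  refine le_antisymm ?_ (le_cc F fun j => LL_tt_ge F j k)
  have := cc_le F (tt_nonneg F k) k
  unfold LL at this
  simpa using this

lemma cc_zero (F : ℕ → ℝ) : cc F 0 = 0 := by
  have := cc_tt F 0
  simpa [tt] using this

lemma LL_min (F : ℕ → ℝ) {k : ℕ} {x : ℝ} (h1 : tt F k ≤ x) (h2 : x ≤ tt F (k+1))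
    (j : ℕ) : LL F k x ≤ LL F j x := by
  have hgj := gg_pos F j
  have hgk := gg_pos F k
  rcases le_or_gt j k with hj | hj
  · have hg : gg F j ≤ gg F k := gg_mono F hj
    have hlt : (k : ℝ) ≤ LL F j (tt F k) := LL_tt_ge F j k
    have key : (x - tt F k) / gg F k ≤ (x - tt F k) / gg F j := by
      rw [div_le_div_iff₀ hgk hgj]
      nlinarith
    have expand : LL F j x = LL F j (tt F k) + (x - tt F k) / gg F j := by
      unfold LL; field_simp; ring
    have expandk : LL F k x = (k : ℝ) + (x - tt F k) / gg F k := rfl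
    rw [expand, expandk]
    linarith
  · have hjk : k + 1 ≤ j := hj
    have hg : gg F k ≤ gg F j := gg_mono F hj.le
    have hlt : ((k : ℝ) + 1) ≤ LL F j (tt F (k+1)) := by
      have := LL_tt_ge F j (k+1)
      push_cast at this
      exact this
    have key : (tt F (k+1) - x) / gg F j ≤ (tt F (k+1) - x) / gg F k := by
      rw [div_le_div_iff₀ hgj hgk]
      nlinarith
    have expandj : LL F j x = LL F j (tt F (k+1)) - (tt F (k+1) - x) / gg F j := by
      unfold LL; field_simp; ring
    have expandk : LL F k x = ((k : ℝ) + 1) - (tt F (k+1) - x) / gg F k := by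
      rw [tt_succ]; unfold LL; field_simp; ring
    rw [expandj, expandk]
    linarith

lemma exists_kk (F : ℕ → ℝ) {x : ℝ} (hx : 0 ≤ x) :
    ∃ k, tt F k ≤ x ∧ x ≤ tt F (k+1) := by
  classical
  have hub : ∃ k, x < tt F k := by
    refine ⟨⌈x⌉₊ + 1, lt_of_lt_of_le ?_ (k_le_tt F (⌈x⌉₊ + 1))⟩
    have := Nat.le_ceil x
    push_cast
    linarith
  have hK : x < tt F (Nat.find hub) := Nat.find_spec hub
  have hK0 : Nat.find hub ≠ 0 := by
    intro h
    rw [h] at hK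
    simp [tt] at hK
    linarith
  obtain ⟨k, hk⟩ := Nat.exists_eq_succ_of_ne_zero hK0
  refine ⟨k, ?_, ?_⟩
  · have := Nat.find_min hub (m := k) (by omega)
    linarith [not_lt.mp this]
  · rw [hk] at hK; exact hK.le

lemma cc_eq (F : ℕ → ℝ) {k : ℕ} {x : ℝ} (h1 : tt F k ≤ x) (h2 : x ≤ tt F (k+1)) :
    cc F x = LL F k x :=
  le_antisymm (cc_le F (le_trans (tt_nonneg F k) h1) k) (le_cc F (LL_min F h1 h2))

lemma cc_strictMono (F : ℕ → ℝ) : StrictMonoOn (cc F) (Set.Ici 0) := by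
  intro x hx y hy hxy
  obtain ⟨k, h1, h2⟩ := exists_kk F (Set.mem_Ici.mp hy)
  have hgk := gg_pos F k
  calc cc F x ≤ LL F k x := cc_le F hx k
    _ < LL F k y := by
        unfold LL
        gcongr
    _ = cc F y := (cc_eq F h1 h2).symm

lemma cc_mono (F : ℕ → ℝ) : MonotoneOn (cc F) (Set.Ici 0) :=
  (cc_strictMono F).monotoneOn

lemma cc_sub_le (F : ℕ → ℝ) {x y : ℝ} (hx : 0 ≤ x) (hy : 0 ≤ y) :
    cc F x - cc F y ≤ |x - y| := by
  obtain ⟨k, h1, h2⟩ := exists_kk F hy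
  have hgk := gg_pos F k
  have hone := one_le_gg F k
  have expand : LL F k x = LL F k y + (x - y) / gg F k := by
    unfold LL; field_simp; ring
  have hdivle : (x - y) / gg F k ≤ |x - y| := by
    rw [div_le_iff₀ hgk]
    calc x - y ≤ |x - y| := le_abs_self _
      _ ≤ |x - y| * gg F k := le_mul_of_one_le_right (abs_nonneg _) hone
  have h3 : cc F x ≤ LL F k x := cc_le F hx k
  have h4 : cc F y = LL F k y := cc_eq F h1 h2
  rw [h4]
  linarith [expand ▸ h3]

lemma cc_cont (F : ℕ → ℝ) : ContinuousOn (cc F) (Set.Ici 0) := by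
  rw [Metric.continuousOn_iff]
  intro b hb ε hε
  refine ⟨ε, hε, fun y hy hd => ?_⟩
  rw [Real.dist_eq]
  rw [Real.dist_eq] at hd
  have h1 := cc_sub_le F (Set.mem_Ici.mp hy) (Set.mem_Ici.mp hb)
  have h2 := cc_sub_le F (Set.mem_Ici.mp hb) (Set.mem_Ici.mp hy)
  rw [abs_sub_comm] at h2
  have : |cc F y - cc F b| ≤ |y - b| := abs_sub_le_iff.mpr ⟨h1, by linarith⟩
  linarith

lemma cc_concave (F : ℕ → ℝ) : ConcaveOn ℝ (Set.Ici 0) (cc F) := by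
  refine ⟨convex_Ici 0, fun x hx y hy a b ha hb hab => ?_⟩
  simp only [smul_eq_mul]
  have hx0 := Set.mem_Ici.mp hx
  have hy0 := Set.mem_Ici.mp hy
  apply le_cc
  intro k
  have hgk := gg_pos F k
  have hLL : LL F k (a * x + b * y) = a * LL F k x + b * LL F k y := by
    unfold LL
    field_simp
    linear_combination (tt F k - (k:ℝ) * gg F k) * hab
  rw [hLL]
  have c1 : a * cc F x ≤ a * LL F k x :=
    mul_le_mul_of_nonneg_left (cc_le F hx0 k) ha
  have c2 : b * cc F y ≤ b * LL F k y :=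
    mul_le_mul_of_nonneg_left (cc_le F hy0 k) hb
  linarith

lemma cc_unbdd (F : ℕ → ℝ) (M : ℝ) : ∃ r, 0 ≤ r ∧ M ≤ cc F r := by
  refine ⟨tt F ⌈M⌉₊, tt_nonneg F _, ?_⟩
  rw [cc_tt]
  exact Nat.le_ceil M

lemma cc_homog (F : ℕ → ℝ) {s u : ℝ} (hs : 0 < s) (hu : 0 ≤ u) (hus : u ≤ s) :
    (u / s) * cc F s ≤ cc F u := by
  have h1 : (0:ℝ) ≤ 1 - u / s := by
    rw [sub_nonneg, div_le_one hs]; exact hus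
  have h2 : (0:ℝ) ≤ u / s := by positivity
  have h3 : (1 - u / s) + u / s = 1 := by ring
  have hc := (cc_concave F).2 Set.self_mem_Ici (Set.mem_Ici.mpr hs.le) h1 h2 h3
  simp only [smul_eq_mul] at hc
  have harg : (1 - u / s) * 0 + u / s * s = u := by field_simp; ring
  rw [harg, cc_zero, mul_zero, zero_add] at hc
  exact hc

lemma cc_subadd (F : ℕ → ℝ) {a b : ℝ} (ha : 0 ≤ a) (hb : 0 ≤ b) :
    cc F (a + b) ≤ cc F a + cc F b := by
  rcases eq_or_lt_of_le (add_nonneg ha hb) with h | h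
  · have ha0 : a = 0 := by linarith
    have hb0 : b = 0 := by linarith
    simp [ha0, hb0, cc_zero]
  · have hab : 0 < a + b := h
    have h1 : (a / (a + b)) * cc F (a + b) ≤ cc F a :=
      cc_homog F hab ha (by linarith)
    have h2 : (b / (a + b)) * cc F (a + b) ≤ cc F b :=
      cc_homog F hab hb (by linarith)
    have hsum : a / (a + b) * cc F (a + b) + b / (a + b) * cc F (a + b)
        = cc F (a + b) := by
      rw [← add_mul, ← add_div, div_self hab.ne', one_mul]
    linarith

lemma cc_control (F : ℕ → ℝ) (s : ℝ) (hs : 0 < s) :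
    ∃ m : ℕ, 0 < m ∧ (∀ x : ℝ, (m : ℝ) ≤ x → s ≤ cc F x) ∧
      (∀ x : ℝ, 0 ≤ x → x ≤ F m → cc F x ≤ s + 2) := by
  set k := ⌈s⌉₊ with hk
  have hk1 : 1 ≤ k := Nat.ceil_pos.mpr hs
  have htk : (1 : ℝ) ≤ tt F k := le_trans (by exact_mod_cast hk1) (k_le_tt F k)
  refine ⟨⌈tt F k⌉₊, Nat.ceil_pos.mpr (by linarith), ?_, ?_⟩
  · intro x hx
    have h1 : tt F k ≤ (⌈tt F k⌉₊ : ℝ) := Nat.le_ceil _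
    have h2 : cc F (tt F k) ≤ cc F x :=
      cc_mono F (Set.mem_Ici.mpr (tt_nonneg F k)) (Set.mem_Ici.mpr (by linarith))
        (by linarith)
    rw [cc_tt] at h2
    exact le_trans (Nat.le_ceil s) h2
  · intro x hx hxF
    have hB : F ⌈tt F k⌉₊ ≤ Baux F (tt F k) := le_Baux F (tt F k) _ le_rfl
    obtain ⟨k', hk'⟩ := Nat.exists_eq_succ_of_ne_zero (by omega : k ≠ 0)
    have hBg : Baux F (tt F k) ≤ gg F k := by
      rw [hk']; exact Baux_le_gg F k'
    have hgt : gg F k ≤ tt F (k + 1) := by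
      rw [tt_succ]
      linarith [tt_nonneg F k]
    have hxle : x ≤ tt F (k + 1) := by linarith
    have h2 : cc F x ≤ cc F (tt F (k + 1)) :=
      cc_mono F (Set.mem_Ici.mpr hx)
        (Set.mem_Ici.mpr (tt_nonneg F (k + 1))) hxle
    rw [cc_tt] at h2
    have hceil : (k : ℝ) < s + 1 := by
      rw [hk]; exact Nat.ceil_lt_add_one hs.le
    push_cast at h2
    linarith

theorem stmt_10 (l : ℕ) (X : Fin l → Type*)
    (d : ∀ i, X i → X i → ℝ) (hmet : ∀ i, IsMetric (d i))
    (n : ℕ) (nn : Fin l → ℕ)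
    (hprod : ∃ D : ℝ → ℝ,
      IsControlFunction (fun x y : ∀ i, X i => ⨆ i, d i (x i) (y i)) n D)
    (hfac : ∀ i, ∃ D : ℝ → ℝ, IsControlFunction (d i) (nn i) D) :
    ∃ c : ℝ → ℝ,
      (∀ r, 0 ≤ r → 0 ≤ c r) ∧
      ConcaveOn ℝ (Set.Ici (0 : ℝ)) c ∧
      StrictMonoOn c (Set.Ici (0 : ℝ)) ∧
      ContinuousOn c (Set.Ici (0 : ℝ)) ∧
      (∀ M : ℝ, ∃ r, 0 ≤ r ∧ M ≤ c r) ∧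
      c 0 = 0 ∧
      IsMetric (fun x y : ∀ i, X i => c (⨆ i, d i (x i) (y i))) ∧
      (∀ i, IsMetric (fun a b : X i => c (d i a b))) ∧
      (∀ x y : ∀ i, X i, c (⨆ i, d i (x i) (y i)) = ⨆ i, c (d i (x i) (y i))) ∧
      IsControlFunction (fun x y : ∀ i, X i => c (⨆ i, d i (x i) (y i))) n
        (fun r => r + 2) ∧
      (∀ i, IsControlFunction (fun a b : X i => c (d i a b)) (nn i)
        (fun r => r + 2)) := by
  classical
  obtain ⟨D0, hD0⟩ := hprod
  choose DD hDD using hfac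
  set F : ℕ → ℝ := fun m => |D0 m| + ∑ i, |DD i m| with hF
  have hFD0 : ∀ m : ℕ, D0 (m : ℝ) ≤ F m := by
    intro m
    have : (0:ℝ) ≤ ∑ i, |DD i (m : ℝ)| := Finset.sum_nonneg fun i _ => abs_nonneg _
    have h2 : D0 (m : ℝ) ≤ |D0 (m : ℝ)| := le_abs_self _
    rw [hF]; dsimp; linarith
  have hFDD : ∀ (i : Fin l) (m : ℕ), DD i (m : ℝ) ≤ F m := by
    intro i m
    have h1 : |DD i (m : ℝ)| ≤ ∑ j, |DD j (m : ℝ)| :=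
      Finset.single_le_sum (f := fun j => |DD j (m : ℝ)|) (fun j _ => abs_nonneg _)
        (Finset.mem_univ i)
    have h2 : DD i (m : ℝ) ≤ |DD i (m : ℝ)| := le_abs_self _
    have h3 : (0:ℝ) ≤ |D0 (m : ℝ)| := abs_nonneg _
    rw [hF]; dsimp; linarith
  -- basic facts about the factor metrics and the sup metric
  have hd0 : ∀ i (a b : X i), 0 ≤ d i a b := fun i => (hmet i).1
  have hdzero : ∀ i (a b : X i), d i a b = 0 ↔ a = b := fun i => (hmet i).2.1
  have hdsymm : ∀ i (a b : X i), d i a b = d i b a := fun i => (hmet i).2.2.1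
  have hdtri : ∀ i (a b c : X i), d i a c ≤ d i a b + d i b c := fun i => (hmet i).2.2.2
  have hbdd : ∀ f : Fin l → ℝ, BddAbove (Set.range f) :=
    fun f => (Set.finite_range f).bddAbove
  have he_nonneg : ∀ x y : ∀ i, X i, 0 ≤ ⨆ i, d i (x i) (y i) :=
    fun x y => Real.iSup_nonneg fun i => hd0 i _ _
  have he_le : ∀ (x y : ∀ i, X i) (i : Fin l),
      d i (x i) (y i) ≤ ⨆ j, d j (x j) (y j) :=
    fun x y i => le_ciSup (f := fun j => d j (x j) (y j)) (hbdd _) i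
  have he_zero : ∀ x y : ∀ i, X i, (⨆ i, d i (x i) (y i)) = 0 ↔ x = y := by
    intro x y
    constructor
    · intro h
      funext i
      have h1 := he_le x y i
      rw [h] at h1
      exact (hdzero i _ _).mp (le_antisymm h1 (hd0 i _ _))
    · rintro rfl
      refine le_antisymm (Real.iSup_le (fun i => ?_) le_rfl) (he_nonneg x x)
      exact le_of_eq ((hdzero i _ _).mpr rfl)
  have he_symm : ∀ x y : ∀ i, X i,
      (⨆ i, d i (x i) (y i)) = ⨆ i, d i (y i) (x i) := by
    intro x y
    congr 1
    funext i
    exact hdsymm i _ _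
  have he_tri : ∀ x y z : ∀ i, X i,
      (⨆ i, d i (x i) (z i)) ≤ (⨆ i, d i (x i) (y i)) + ⨆ i, d i (y i) (z i) := by
    intro x y z
    refine Real.iSup_le (fun i => ?_) (add_nonneg (he_nonneg x y) (he_nonneg y z))
    exact le_trans (hdtri i _ _ _) (add_le_add (he_le x y i) (he_le y z i))
  -- facts about cc F
  have hcc0iff : ∀ r : ℝ, 0 ≤ r → (cc F r = 0 ↔ r = 0) := by
    intro r hr
    constructor
    · intro h
      by_contra hne
      have hpos : 0 < r := lt_of_le_of_ne hr (Ne.symm hne)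
      have := cc_strictMono F Set.self_mem_Ici (Set.mem_Ici.mpr hr) hpos
      rw [cc_zero, h] at this
      exact lt_irrefl 0 this
    · rintro rfl
      exact cc_zero F
  refine ⟨cc F, fun r hr => cc_nonneg F hr, cc_concave F, cc_strictMono F,
    cc_cont F, cc_unbdd F, cc_zero F, ?_, ?_, ?_, ?_, ?_⟩
  · -- IsMetric for the product
    refine ⟨fun x y => cc_nonneg F (he_nonneg x y), fun x y => ?_, fun x y => ?_,
      fun x y z => ?_⟩
    · rw [hcc0iff _ (he_nonneg x y)]
      exact he_zero x y
    · show cc F (⨆ i, d i (x i) (y i)) = cc F (⨆ i, d i (y i) (x i))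
      rw [he_symm]
    · calc cc F (⨆ i, d i (x i) (z i))
          ≤ cc F ((⨆ i, d i (x i) (y i)) + ⨆ i, d i (y i) (z i)) :=
            cc_mono F (Set.mem_Ici.mpr (he_nonneg x z))
              (Set.mem_Ici.mpr (add_nonneg (he_nonneg x y) (he_nonneg y z)))
              (he_tri x y z)
        _ ≤ _ := cc_subadd F (he_nonneg x y) (he_nonneg y z)
  · -- IsMetric for each factor
    intro i
    refine ⟨fun a b => cc_nonneg F (hd0 i a b), fun a b => ?_, fun a b => ?_,
      fun a b c => ?_⟩
    · rw [hcc0iff _ (hd0 i a b)]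
      exact hdzero i a b
    · show cc F (d i a b) = cc F (d i b a)
      rw [hdsymm i a b]
    · calc cc F (d i a c) ≤ cc F (d i a b + d i b c) :=
          cc_mono F (Set.mem_Ici.mpr (hd0 i a c))
            (Set.mem_Ici.mpr (add_nonneg (hd0 i a b) (hd0 i b c))) (hdtri i a b c)
        _ ≤ _ := cc_subadd F (hd0 i a b) (hd0 i b c)
  · -- cc commutes with the sup
    intro x y
    rcases isEmpty_or_nonempty (Fin l) with hempty | hne
    · rw [Real.iSup_of_isEmpty, Real.iSup_of_isEmpty, cc_zero]
    · obtain ⟨i₀, hi₀⟩ := Finite.exists_max fun i => d i (x i) (y i)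
      have hsup : (⨆ i, d i (x i) (y i)) = d i₀ (x i₀) (y i₀) :=
        le_antisymm (ciSup_le hi₀) (he_le x y i₀)
      have hsup2 : (⨆ i, cc F (d i (x i) (y i))) = cc F (d i₀ (x i₀) (y i₀)) := by
        refine le_antisymm (ciSup_le fun i => ?_) (le_ciSup (f := fun i => cc F (d i (x i) (y i))) (hbdd _) i₀)
        exact cc_mono F (Set.mem_Ici.mpr (hd0 i _ _)) (Set.mem_Ici.mpr (hd0 i₀ _ _))
          (hi₀ i)
      rw [hsup, hsup2]
  · -- control function for the product
    intro s hs
    obtain ⟨m, hm, hlow, hup⟩ := cc_control F s hs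
    obtain ⟨𝒰, hcov, hdisj, hdiam⟩ := hD0 (m : ℝ) (by exact_mod_cast hm)
    refine ⟨𝒰, hcov, fun i U hU V hV hUV u hu v hv =>
      hlow _ (hdisj i U hU V hV hUV u hu v hv), fun i U hU u hu v hv =>
      hup _ (he_nonneg u v) (le_trans (hdiam i U hU u hu v hv) (hFD0 m))⟩
  · -- control function for each factor
    intro j s hs
    obtain ⟨m, hm, hlow, hup⟩ := cc_control F s hs
    obtain ⟨𝒰, hcov, hdisj, hdiam⟩ := hDD j (m : ℝ) (by exact_mod_cast hm)
    refine ⟨𝒰, hcov, fun i U hU V hV hUV u hu v hv =>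
      hlow _ (hdisj i U hU V hV hUV u hu v hv), fun i U hU u hu v hv =>
      hup _ (hd0 j u v) (le_trans (hdiam i U hU u hu v hv) (hFDD j m))⟩
end

section
/- Suppose there exist metric spaces (X₁,d₁), (X₂,d₂) and natural numbers n₁, n₂, m with m < n₁ + n₂ such that: each (Xᵢ,dᵢ) admits a real-valued nᵢ-dimensional control function but admits no real-valued (nᵢ−1)-dimensional control function, and the product X₁ × X₂ with the sup metric admits a real-valued m-dimensional control function. Then there exist metric spaces (Y₁, e₁), (Y₂, e₂) such that each (Yᵢ, eᵢ) admits an affine nᵢ-dimensional control function but admits no real-valued (nᵢ−1)-dimensional control function, and Y₁ × Y₂ with the sup metric admits an affine m-dimensional control function; in particular the asymptotic Assouad–Nagata dimension of the product is strictly less than the sum of the asymptotic Assouad–Nagata dimensions of the factors. -/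
noncomputable section AuxAN

namespace AuxAN

/-- Affine pieces. -/
def aL (r : ℕ → ℝ) (k : ℕ) (t : ℝ) : ℝ :=
  (k : ℝ) + 1 + (t - r k) / (r (k + 1) - r k)

/-- The taming function: min of `id` and all affine pieces. -/
def ff (r : ℕ → ℝ) (t : ℝ) : ℝ :=
  min t (⨅ k : ℕ, aL r k t)

variable (r : ℕ → ℝ) (hr0 : r 0 = 1) (hr2 : ∀ k, 2 * r k ≤ r (k + 1))

section basic
include hr0 hr2

lemma one_le_r : ∀ k, 1 ≤ r k := by
  intro k
  induction k with
  | zero => simp [hr0]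
  | succ n ih => have := hr2 n; linarith

lemma gap_ge (k : ℕ) : r k ≤ r (k + 1) - r k := by
  have := hr2 k; linarith

lemma gap_one_le (k : ℕ) : 1 ≤ r (k + 1) - r k :=
  le_trans (one_le_r r hr0 hr2 k) (gap_ge r hr0 hr2 k)

lemma gap_pos (k : ℕ) : 0 < r (k + 1) - r k :=
  lt_of_lt_of_le one_pos (gap_one_le r hr0 hr2 k)

lemma gap_mono {j k : ℕ} (h : j ≤ k) :
    r (j + 1) - r j ≤ r (k + 1) - r k := by
  induction h with
  | refl => exact le_rfl
  | @step k h ih =>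
    have h1 := hr2 (k + 1)
    have h2 := one_le_r r hr0 hr2 k
    have h3 := one_le_r r hr0 hr2 (k + 1)
    calc r (j + 1) - r j ≤ r (k + 1) - r k := ih
      _ ≤ r (k + 1 + 1) - r (k + 1) := by linarith

lemma r_ge (k : ℕ) : (k : ℝ) + 1 ≤ r k := by
  induction k with
  | zero => simp [hr0]
  | succ n ih =>
    have h1 := hr2 n
    have h2 := one_le_r r hr0 hr2 n
    push_cast
    linarith

lemma aL_lb (k : ℕ) (t : ℝ) : (k : ℝ) + min t 0 ≤ aL r k t := by
  have hg1 := gap_one_le r hr0 hr2 k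
  have hgr := gap_ge r hr0 hr2 k
  have hgpos := gap_pos r hr0 hr2 k
  have h1 := one_le_r r hr0 hr2 k
  have key : (min t 0 - 1) * (r (k + 1) - r k) ≤ t - r k := by
    rcases le_total t 0 with ht | ht
    · rw [min_eq_left ht]; nlinarith
    · rw [min_eq_right ht]; nlinarith
  have h2 : min t 0 - 1 ≤ (t - r k) / (r (k + 1) - r k) :=
    (le_div_iff₀ hgpos).mpr key
  unfold aL; linarith

lemma bddL (t : ℝ) : BddBelow (Set.range fun k : ℕ => aL r k t) := by
  refine ⟨min t 0, ?_⟩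
  rintro x ⟨k, rfl⟩
  have := aL_lb r hr0 hr2 k t
  have hk : (0 : ℝ) ≤ (k : ℝ) := Nat.cast_nonneg k
  simp only
  linarith

lemma ff_le_aL (k : ℕ) (t : ℝ) : ff r t ≤ aL r k t :=
  le_trans (min_le_right _ _) (ciInf_le (bddL r hr0 hr2 t) k)

lemma aL_mono (k : ℕ) : Monotone (aL r k) := by
  intro a b hab
  unfold aL
  have hgpos := gap_pos r hr0 hr2 k
  have : (a - r k) / (r (k + 1) - r k) ≤ (b - r k) / (r (k + 1) - r k) :=
    (div_le_div_iff_of_pos_right hgpos).mpr (by linarith)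
  linarith

lemma ff_mono : Monotone (ff r) := by
  intro a b hab
  exact min_le_min hab (ciInf_mono (bddL r hr0 hr2 a) fun k => aL_mono r hr0 hr2 k hab)

lemma ff_nonneg {t : ℝ} (ht : 0 ≤ t) : 0 ≤ ff r t := by
  refine le_min ht (le_ciInf fun k => ?_)
  have := aL_lb r hr0 hr2 k t
  have hk : (0 : ℝ) ≤ (k : ℝ) := Nat.cast_nonneg k
  rw [min_eq_right ht] at this
  linarith

lemma ff_zero : ff r 0 = 0 :=
  le_antisymm (min_le_left _ _) (ff_nonneg r hr0 hr2 le_rfl)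

lemma ff_pos {t : ℝ} (ht : 0 < t) : 0 < ff r t := by
  have hg1 : 1 ≤ r 1 - r 0 := gap_one_le r hr0 hr2 0
  have hgpos : 0 < r 1 - r 0 := by linarith
  have hr1 : 2 ≤ r 1 := by have := hr2 0; rw [hr0] at this; linarith
  have hmin : 0 < min t 1 := lt_min ht one_pos
  have hlb : min t 1 / (r 1 - r 0) ≤ ff r t := by
    refine le_min ?_ (le_ciInf fun j => ?_)
    · calc min t 1 / (r 1 - r 0) ≤ min t 1 := div_le_self hmin.le hg1
        _ ≤ t := min_le_left _ _
    · match j with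
      | 0 =>
        have hL : aL r 0 t = 1 + (t - r 0) / (r 1 - r 0) := by
          simp [aL]
        rw [hL, div_le_iff₀ hgpos]
        have hexp : (1 + (t - r 0) / (r 1 - r 0)) * (r 1 - r 0)
            = (r 1 - r 0) + (t - r 0) := by field_simp
        rw [hexp, hr0]
        rcases le_total t 1 with h | h
        · rw [min_eq_left h]; linarith
        · rw [min_eq_right h]; linarith
      | Nat.succ j =>
        have h1 := aL_lb r hr0 hr2 (j + 1) t
        rw [min_eq_right ht.le] at h1
        have hj : (0:ℝ) ≤ (j:ℝ) := Nat.cast_nonneg j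
        have h2 : min t 1 / (r 1 - r 0) ≤ 1 :=
          le_trans (div_le_self hmin.le hg1) (min_le_right _ _)
        push_cast at h1
        linarith
  exact lt_of_lt_of_le (div_pos hmin hgpos) hlb

omit hr0 hr2 in
lemma ff_le_id (t : ℝ) : ff r t ≤ t := min_le_left _ _

lemma aL_affine (k : ℕ) (t : ℝ) :
    aL r k t = aL r k 0 + t / (r (k + 1) - r k) := by
  have hg := (gap_pos r hr0 hr2 k).ne'
  unfold aL
  field_simp
  ring

lemma aL_zero_nonneg (k : ℕ) : 0 ≤ aL r k 0 := by
  have := aL_lb r hr0 hr2 k 0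
  have hk : (0 : ℝ) ≤ (k : ℝ) := Nat.cast_nonneg k
  simp only [min_self] at this
  linarith

lemma ff_concave_piece {a c : ℝ} (ha : 0 ≤ a) (hac : a ≤ c) (hc : 0 < c) :
    a / c * ff r c ≤ ff r a := by
  have hfc : 0 ≤ ff r c := ff_nonneg r hr0 hr2 hc.le
  have hdiv : 0 ≤ a / c := div_nonneg ha hc.le
  have hdiv1 : a / c ≤ 1 := by
    rw [div_le_one hc]; exact hac
  refine le_min ?_ (le_ciInf fun k => ?_)
  · calc a / c * ff r c ≤ a / c * c :=
        mul_le_mul_of_nonneg_left (ff_le_id r c) hdiv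
      _ = a := div_mul_cancel₀ a hc.ne'
  · have hA := aL_zero_nonneg r hr0 hr2 k
    have hgpos := gap_pos r hr0 hr2 k
    calc a / c * ff r c ≤ a / c * aL r k c :=
          mul_le_mul_of_nonneg_left (ff_le_aL r hr0 hr2 k c) hdiv
      _ = a / c * aL r k 0 + a / (r (k+1) - r k) := by
          rw [aL_affine r hr0 hr2 k c]
          rw [mul_add]
          congr 1
          rw [div_mul_div_comm, mul_comm c _]
          rw [mul_div_mul_right _ _ hc.ne']
      _ ≤ aL r k 0 + a / (r (k+1) - r k) := by
          have : a / c * aL r k 0 ≤ aL r k 0 :=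
            mul_le_of_le_one_left hA hdiv1
          linarith
      _ = aL r k a := (aL_affine r hr0 hr2 k a).symm

lemma ff_subadd {a b : ℝ} (ha : 0 ≤ a) (hb : 0 ≤ b) :
    ff r (a + b) ≤ ff r a + ff r b := by
  rcases eq_or_lt_of_le (by linarith : (0:ℝ) ≤ a + b) with h | hc
  · have ha0 : a = 0 := by linarith
    have hb0 : b = 0 := by linarith
    simp [ha0, hb0, ff_zero r hr0 hr2]
  · have h1 := ff_concave_piece r hr0 hr2 ha (by linarith : a ≤ a + b) hc
    have h2 := ff_concave_piece r hr0 hr2 hb (by linarith : b ≤ a + b) hc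
    have h3 : a / (a+b) * ff r (a+b) + b / (a+b) * ff r (a+b) = ff r (a+b) := by
      field_simp
    linarith

omit hr0 hr2 in
lemma aL_self (k : ℕ) : aL r k (r k) = (k : ℝ) + 1 := by
  unfold aL
  simp [sub_self, zero_div]

lemma aL_step (j k : ℕ) :
    aL r j (r (k + 1)) = aL r j (r k) + (r (k+1) - r k) / (r (j+1) - r j) := by
  have hg := (gap_pos r hr0 hr2 j).ne'
  unfold aL
  field_simp
  ring

lemma aL_ge (k j : ℕ) : (k : ℝ) + 1 ≤ aL r j (r k) := by
  induction k with
  | zero =>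
    match j with
    | 0 => rw [aL_self r 0]
    | Nat.succ j =>
      have h1 := aL_lb r hr0 hr2 (j+1) (r 0)
      have h0 : (0:ℝ) < r 0 := by rw [hr0]; norm_num
      rw [min_eq_right h0.le] at h1
      have hj : (0:ℝ) ≤ (j:ℝ) := Nat.cast_nonneg j
      push_cast at h1 ⊢
      linarith
  | succ k ih =>
    rcases lt_trichotomy j (k + 1) with h | h | h
    · have hjk : j ≤ k := Nat.lt_succ_iff.mp h
      rw [aL_step r hr0 hr2 j k]
      have hgm := gap_mono r hr0 hr2 hjk
      have hgj := gap_pos r hr0 hr2 j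
      have hone : 1 ≤ (r (k+1) - r k) / (r (j+1) - r j) :=
        (one_le_div hgj).mpr hgm
      push_cast
      linarith
    · subst h
      rw [aL_self r (k+1)]
    · have h1 := aL_lb r hr0 hr2 j (r (k+1))
      have h0 : (0:ℝ) < r (k+1) := lt_of_lt_of_le one_pos (one_le_r r hr0 hr2 (k+1))
      rw [min_eq_right h0.le] at h1
      have hj' : k + 2 ≤ j := h
      have hj : ((k:ℝ) + 2) ≤ (j:ℝ) := by exact_mod_cast hj' 
      push_cast
      linarith

lemma ff_r_lower (k : ℕ) : (k : ℝ) + 1 ≤ ff r (r k) :=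
  le_min (r_ge r hr0 hr2 k) (le_ciInf fun j => aL_ge r hr0 hr2 k j)

lemma ff_r_upper (k : ℕ) : ff r (r (k + 1)) ≤ (k : ℝ) + 2 := by
  have h := ff_le_aL r hr0 hr2 k (r (k+1))
  have hg := (gap_pos r hr0 hr2 k).ne'
  unfold aL at h
  rw [div_self hg] at h
  linarith

lemma transfer {X : Type} (d : X → X → ℝ) (n : ℕ) (D : ℝ → ℝ)
    (hD : IsControlFunction d n D) (hdom : ∀ k, |D (r k)| ≤ r (k + 1)) :
    IsControlFunction (fun x y => ff r (d x y)) n (fun s => 1 * s + 3) := by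
  intro s hs
  set k := ⌈s⌉₊ with hk
  have hrk : 0 < r k := lt_of_lt_of_le one_pos (one_le_r r hr0 hr2 k)
  obtain ⟨𝒰, hcov, hdisj, hdiam⟩ := hD (r k) hrk
  refine ⟨𝒰, hcov, ?_, ?_⟩
  · intro i U hU V hV hUV u hu v hv
    have h1 := hdisj i U hU V hV hUV u hu v hv
    have h2 : ff r (r k) ≤ ff r (d u v) := ff_mono r hr0 hr2 h1
    have h3 := ff_r_lower r hr0 hr2 k
    have h4 : s ≤ (k : ℝ) := Nat.le_ceil s
    simp only
    linarith
  · intro i U hU u hu v hv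
    have h1 := hdiam i U hU u hu v hv
    have h2 : d u v ≤ r (k + 1) := le_trans h1 ((le_abs_self _).trans (hdom k))
    have h3 : ff r (d u v) ≤ ff r (r (k + 1)) := ff_mono r hr0 hr2 h2
    have h4 := ff_r_upper r hr0 hr2 k
    have h5 : (k : ℝ) < s + 1 := Nat.ceil_lt_add_one hs.le
    simp only
    linarith

lemma reverse {X : Type} (d : X → X → ℝ) (n : ℕ) (D : ℝ → ℝ)
    (hD : IsControlFunction (fun x y => ff r (d x y)) n D) :
    ∃ D' : ℝ → ℝ, IsControlFunction d n D' := by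
  refine ⟨fun t => r ⌈max (D (ff r t + 1)) 0⌉₊, ?_⟩
  intro t ht
  have hfnn : 0 ≤ ff r t := ff_nonneg r hr0 hr2 ht.le
  have hspos : 0 < ff r t + 1 := by linarith
  obtain ⟨𝒰, hcov, hdisj, hdiam⟩ := hD (ff r t + 1) hspos
  refine ⟨𝒰, hcov, ?_, ?_⟩
  · intro i U hU V hV hUV u hu v hv
    have h1 := hdisj i U hU V hV hUV u hu v hv
    by_contra h
    push_neg at h
    have h2 : ff r (d u v) ≤ ff r t := ff_mono r hr0 hr2 h.le
    simp only at h1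
    linarith
  · intro i U hU u hu v hv
    have h1 := hdiam i U hU u hu v hv
    set K := ⌈max (D (ff r t + 1)) 0⌉₊ with hK
    by_contra h
    push_neg at h
    have h2 : ff r (r K) ≤ ff r (d u v) := ff_mono r hr0 hr2 h.le
    have h3 := ff_r_lower r hr0 hr2 K
    have h4 : max (D (ff r t + 1)) 0 ≤ (K : ℝ) := Nat.le_ceil _
    have h5 : D (ff r t + 1) ≤ (K : ℝ) := le_trans (le_max_left _ _) h4
    simp only at h1
    linarith

lemma metric {X : Type} (d : X → X → ℝ) (hd : IsMetric d) :
    IsMetric (fun x y => ff r (d x y)) := by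
  obtain ⟨h0, he, hsym, htri⟩ := hd
  refine ⟨fun x y => ff_nonneg r hr0 hr2 (h0 x y), fun x y => ?_,
    fun x y => by simp only; rw [hsym], fun x y z => ?_⟩
  · constructor
    · intro hf
      by_contra hxy
      have hd0 : d x y ≠ 0 := fun h => hxy ((he x y).mp h)
      have hpos : 0 < d x y := lt_of_le_of_ne (h0 x y) (Ne.symm hd0)
      have := ff_pos r hr0 hr2 hpos
      simp only at hf
      linarith
    · intro h
      subst h
      simp only
      rw [(he x x).mpr rfl, ff_zero r hr0 hr2]
  · simp only
    calc ff r (d x z) ≤ ff r (d x y + d y z) := ff_mono r hr0 hr2 (htri x y z)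
      _ ≤ ff r (d x y) + ff r (d y z) := ff_subadd r hr0 hr2 (h0 x y) (h0 y z)

end basic

end AuxAN

end AuxAN

theorem stmt_11 {X₁ X₂ : Type} (d₁ : X₁ → X₁ → ℝ) (d₂ : X₂ → X₂ → ℝ)
    (hmet₁ : IsMetric d₁) (hmet₂ : IsMetric d₂)
    (n₁ n₂ m : ℕ) (hm : m < n₁ + n₂)
    (hdim₁ : ∃ D : ℝ → ℝ, IsControlFunction d₁ n₁ D)
    (hnot₁ : ¬ ∃ D : ℝ → ℝ, IsControlFunction d₁ (n₁ - 1) D)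
    (hdim₂ : ∃ D : ℝ → ℝ, IsControlFunction d₂ n₂ D)
    (hnot₂ : ¬ ∃ D : ℝ → ℝ, IsControlFunction d₂ (n₂ - 1) D)
    (hdimprod : ∃ D : ℝ → ℝ,
      IsControlFunction
        (fun p q : X₁ × X₂ => max (d₁ p.1 q.1) (d₂ p.2 q.2)) m D) :
    ∃ (Y₁ Y₂ : Type) (e₁ : Y₁ → Y₁ → ℝ) (e₂ : Y₂ → Y₂ → ℝ),
      IsMetric e₁ ∧ IsMetric e₂ ∧
      (∃ A B : ℝ, IsControlFunction e₁ n₁ (fun r => A * r + B)) ∧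
      (¬ ∃ D : ℝ → ℝ, IsControlFunction e₁ (n₁ - 1) D) ∧
      (∃ A B : ℝ, IsControlFunction e₂ n₂ (fun r => A * r + B)) ∧
      (¬ ∃ D : ℝ → ℝ, IsControlFunction e₂ (n₂ - 1) D) ∧
      (∃ A B : ℝ, IsControlFunction
        (fun p q : Y₁ × Y₂ => max (e₁ p.1 q.1) (e₂ p.2 q.2)) m
        (fun r => A * r + B)) := by
  classical
  obtain ⟨D₁, hD₁⟩ := hdim₁
  obtain ⟨D₂, hD₂⟩ := hdim₂
  obtain ⟨D₃, hD₃⟩ := hdimprod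
  set r : ℕ → ℝ := fun k =>
    Nat.rec (motive := fun _ => ℝ) 1
      (fun _ p => max (|D₁ p| + |D₂ p| + |D₃ p| + 1) (2 * p)) k with hrdef
  have hr0 : r 0 = 1 := rfl
  have hrsucc : ∀ k, r (k + 1) =
      max (|D₁ (r k)| + |D₂ (r k)| + |D₃ (r k)| + 1) (2 * r k) := fun k => rfl
  have hr2 : ∀ k, 2 * r k ≤ r (k + 1) := fun k => by
    rw [hrsucc]; exact le_max_right _ _
  have hdom1 : ∀ k, |D₁ (r k)| ≤ r (k + 1) := by
    intro k
    rw [hrsucc]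
    refine le_trans ?_ (le_max_left _ _)
    have := abs_nonneg (D₂ (r k)); have := abs_nonneg (D₃ (r k)); linarith
  have hdom2 : ∀ k, |D₂ (r k)| ≤ r (k + 1) := by
    intro k
    rw [hrsucc]
    refine le_trans ?_ (le_max_left _ _)
    have := abs_nonneg (D₁ (r k)); have := abs_nonneg (D₃ (r k)); linarith
  have hdom3 : ∀ k, |D₃ (r k)| ≤ r (k + 1) := by
    intro k
    rw [hrsucc]
    refine le_trans ?_ (le_max_left _ _)
    have := abs_nonneg (D₁ (r k)); have := abs_nonneg (D₂ (r k)); linarith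
  refine ⟨X₁, X₂, fun x y => AuxAN.ff r (d₁ x y), fun x y => AuxAN.ff r (d₂ x y),
    AuxAN.metric r hr0 hr2 d₁ hmet₁, AuxAN.metric r hr0 hr2 d₂ hmet₂,
    ⟨1, 3, AuxAN.transfer r hr0 hr2 d₁ n₁ D₁ hD₁ hdom1⟩, ?_,
    ⟨1, 3, AuxAN.transfer r hr0 hr2 d₂ n₂ D₂ hD₂ hdom2⟩, ?_, ⟨1, 3, ?_⟩⟩
  · rintro ⟨D, hD⟩
    exact hnot₁ (AuxAN.reverse r hr0 hr2 d₁ (n₁ - 1) D hD)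
  · rintro ⟨D, hD⟩
    exact hnot₂ (AuxAN.reverse r hr0 hr2 d₂ (n₂ - 1) D hD)
  · have htr := AuxAN.transfer r hr0 hr2
      (fun p q : X₁ × X₂ => max (d₁ p.1 q.1) (d₂ p.2 q.2)) m D₃ hD₃ hdom3
    have heq : (fun p q : X₁ × X₂ =>
        max (AuxAN.ff r (d₁ p.1 q.1)) (AuxAN.ff r (d₂ p.2 q.2))) =
        fun p q => AuxAN.ff r (max (d₁ p.1 q.1) (d₂ p.2 q.2)) := by
      funext p q
      exact ((AuxAN.ff_mono r hr0 hr2).map_max).symm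
    rw [heq]
    exact htr
end

section
/- Let (X,d_X), (Y,d_Y) be metric spaces and f : X → Y a coarse equivalence: there exist nondecreasing unbounded functions φ, Φ : [0,∞) → [0,∞) with φ(d_X(x,x')) ≤ d_Y(f(x),f(x')) ≤ Φ(d_X(x,x')) for all x, x' ∈ X. Then there exist functions c_X, c_Y : [0,∞) → [0,∞), each concave, strictly increasing, continuous, unbounded, and vanishing exactly at 0, such that, with d_X' = c_X ∘ d_X and d_Y' = c_Y ∘ d_Y (which are metrics), for all x, x' ∈ X: d_X'(x,x') − 2 ≤ d_Y'(f(x), f(x')) ≤ d_X'(x,x') + 1; in particular f : (X,d_X') → (Y,d_Y') is a quasi-isometric embedding, indeed an isometry up to an additive constant. -/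
open Set

namespace Stmt12Aux

/-- Breakpoint sequence hypotheses. -/
def Goodb (a : ℕ → ℝ) : Prop :=
  a 0 = 0 ∧ (∀ n, 1 ≤ a (n+1) - a n) ∧ ∀ n, a (n+1) - a n ≤ a (n+2) - a (n+1)

/-- The n-th supporting line. -/
noncomputable def Lf (a : ℕ → ℝ) (n : ℕ) (t : ℝ) : ℝ :=
  (n : ℝ) + (t - a n) * (a (n+1) - a n)⁻¹

/-- Concave piecewise-linear function with breakpoints `a`. -/
noncomputable def PLF (a : ℕ → ℝ) : ℝ → ℝ := fun t => ⨅ n : ℕ, Lf a n t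

variable {a : ℕ → ℝ}

lemma Goodb.g1 (ha : Goodb a) (n : ℕ) : 1 ≤ a (n+1) - a n := ha.2.1 n
lemma Goodb.gpos (ha : Goodb a) (n : ℕ) : 0 < a (n+1) - a n := lt_of_lt_of_le one_pos (ha.g1 n)
lemma Goodb.gmono (ha : Goodb a) : Monotone (fun n => a (n+1) - a n) :=
  monotone_nat_of_le_succ ha.2.2
lemma Goodb.amono (ha : Goodb a) : Monotone a :=
  monotone_nat_of_le_succ fun n => by have := ha.g1 n; linarith
lemma Goodb.a0 (ha : Goodb a) : a 0 = 0 := ha.1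
lemma Goodb.anonneg (ha : Goodb a) (n : ℕ) : 0 ≤ a n := ha.a0 ▸ ha.amono (Nat.zero_le n)
lemma Goodb.nle (ha : Goodb a) (n : ℕ) : (n : ℝ) ≤ a n := by
  induction n with
  | zero => simp [ha.a0]
  | succ n ih => have := ha.g1 n; push_cast; linarith

lemma Goodb.a_le (ha : Goodb a) (n : ℕ) : a n ≤ n * (a (n+1) - a n) := by
  induction n with
  | zero => simp [ha.a0]
  | succ n ih =>
    have h1 := ha.gmono (Nat.le_succ n)
    simp only at h1
    have h2 := ha.gpos n
    have h3 : (0:ℝ) ≤ (n:ℝ) + 1 := by positivity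
    push_cast
    nlinarith

lemma Lf_nonneg (ha : Goodb a) (n : ℕ) {t : ℝ} (ht : 0 ≤ t) : 0 ≤ Lf a n t := by
  have hg := ha.gpos n
  have h1 := ha.a_le n
  have hs : 0 < (a (n+1) - a n)⁻¹ := inv_pos.mpr hg
  have hc : (a (n+1) - a n) * (a (n+1) - a n)⁻¹ = 1 := mul_inv_cancel₀ hg.ne'
  unfold Lf
  nlinarith [mul_nonneg ht hs.le, mul_le_mul_of_nonneg_right h1 hs.le]

lemma Lf_step (ha : Goodb a) (k : ℕ) (t : ℝ) :
    Lf a (k+1) t = Lf a k t + (t - a (k+1)) * ((a (k+2) - a (k+1))⁻¹ - (a (k+1) - a k)⁻¹) := by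
  have h1 := (ha.gpos k).ne'
  have h2 := (ha.gpos (k+1)).ne'
  unfold Lf
  field_simp
  push_cast
  ring

lemma s_antitone (ha : Goodb a) {k l : ℕ} (h : k ≤ l) :
    (a (l+1) - a l)⁻¹ ≤ (a (k+1) - a k)⁻¹ :=
  inv_anti₀ (ha.gpos k) (ha.gmono h)

lemma Lf_succ_le (ha : Goodb a) {k : ℕ} {t : ℝ} (h : a (k+1) ≤ t) :
    Lf a (k+1) t ≤ Lf a k t := by
  rw [Lf_step ha k t]
  have h1 : (a (k+2) - a (k+1))⁻¹ - (a (k+1) - a k)⁻¹ ≤ 0 := by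
    have := s_antitone ha (Nat.le_succ k); linarith
  nlinarith

lemma le_Lf_succ (ha : Goodb a) {k : ℕ} {t : ℝ} (h : t ≤ a (k+1)) :
    Lf a k t ≤ Lf a (k+1) t := by
  rw [Lf_step ha k t]
  have h1 : (a (k+2) - a (k+1))⁻¹ - (a (k+1) - a k)⁻¹ ≤ 0 := by
    have := s_antitone ha (Nat.le_succ k); linarith
  nlinarith

lemma Lf_min (ha : Goodb a) {m : ℕ} {t : ℝ} (h1 : a m ≤ t) (h2 : t ≤ a (m+1)) (n : ℕ) :
    Lf a m t ≤ Lf a n t := by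
  rcases le_total m n with hmn | hnm
  · induction n, hmn using Nat.le_induction with
    | base => exact le_refl _
    | succ k hk ih =>
      refine ih.trans (le_Lf_succ ha ?_)
      exact h2.trans (ha.amono (by omega))
  · -- downward: show ∀ d ≤ m, Lf a m t ≤ Lf a (m - d) t
    have key : ∀ d, d ≤ m → Lf a m t ≤ Lf a (m - d) t := by
      intro d
      induction d with
      | zero => simp
      | succ d ih =>
        intro hdm
        have hd : d ≤ m := by omega
        have hj : m - (d+1) + 1 = m - d := by omega
        refine (ih hd).trans ?_
        have : Lf a (m - (d+1) + 1) t ≤ Lf a (m - (d+1)) t := by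
          refine Lf_succ_le ha ?_
          calc a (m - (d+1) + 1) ≤ a m := ha.amono (by omega)
            _ ≤ t := h1
        rwa [hj] at this
    have := key (m - n) (by omega)
    rwa [show m - (m - n) = n by omega] at this

lemma PLF_bdd (ha : Goodb a) {t : ℝ} (ht : 0 ≤ t) :
    BddBelow (Set.range fun n => Lf a n t) := by
  refine ⟨0, ?_⟩
  rintro x ⟨n, rfl⟩
  exact Lf_nonneg ha n ht

lemma PLF_le_Lf (ha : Goodb a) {t : ℝ} (ht : 0 ≤ t) (n : ℕ) : PLF a t ≤ Lf a n t :=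
  ciInf_le (PLF_bdd ha ht) n

lemma PLF_nonneg (ha : Goodb a) {t : ℝ} (ht : 0 ≤ t) : 0 ≤ PLF a t :=
  le_ciInf fun n => Lf_nonneg ha n ht

lemma PLF_eq (ha : Goodb a) {m : ℕ} {t : ℝ} (h1 : a m ≤ t) (h2 : t ≤ a (m+1)) :
    PLF a t = Lf a m t := by
  have ht : 0 ≤ t := (ha.anonneg m).trans h1
  exact le_antisymm (PLF_le_Lf ha ht m) (le_ciInf (Lf_min ha h1 h2))

lemma PLF_breakpoint (ha : Goodb a) (m : ℕ) : PLF a (a m) = m := by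
  rw [PLF_eq ha le_rfl (ha.amono (Nat.le_succ m))]
  unfold Lf; simp

lemma PLF_zero (ha : Goodb a) : PLF a 0 = 0 := by
  have := PLF_breakpoint ha 0
  rwa [ha.a0, Nat.cast_zero] at this

lemma cover (ha : Goodb a) {t : ℝ} (ht : 0 ≤ t) : ∃ m, a m ≤ t ∧ t ≤ a (m+1) := by
  have hex : ∃ n, t < a n := by
    refine ⟨⌈t⌉₊ + 1, ?_⟩
    have h1 := ha.nle (⌈t⌉₊ + 1)
    have h2 := Nat.le_ceil t
    push_cast at h1 ⊢
    linarith
  have hN := Nat.find_spec hex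
  have hN0 : Nat.find hex ≠ 0 := by
    intro h
    rw [h, ha.a0] at hN
    linarith
  obtain ⟨M, hM⟩ : ∃ M, Nat.find hex = M + 1 := ⟨Nat.find hex - 1, by omega⟩
  refine ⟨M, ?_, ?_⟩
  · have := Nat.find_min hex (m := M) (by omega)
    linarith [le_of_not_gt this]
  · rw [hM] at hN; exact hN.le

lemma PLF_mono (ha : Goodb a) : MonotoneOn (PLF a) (Ici (0:ℝ)) := by
  intro t ht t' ht' h
  refine le_ciInf fun n => (PLF_le_Lf ha ht n).trans ?_
  unfold Lf
  have hs : 0 ≤ (a (n+1) - a n)⁻¹ := (inv_pos.mpr (ha.gpos n)).le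
  nlinarith

lemma PLF_strictMono (ha : Goodb a) : StrictMonoOn (PLF a) (Ici (0:ℝ)) := by
  intro t ht t' ht' htt'
  obtain ⟨m, h1, h2⟩ := cover ha (mem_Ici.mp ht')
  have he : PLF a t' = Lf a m t' := PLF_eq ha h1 h2
  have hle : PLF a t ≤ Lf a m t := PLF_le_Lf ha ht m
  have hlt : Lf a m t < Lf a m t' := by
    unfold Lf
    have hs : 0 < (a (m+1) - a m)⁻¹ := inv_pos.mpr (ha.gpos m)
    nlinarith
  linarith

lemma PLF_concave (ha : Goodb a) : ConcaveOn ℝ (Ici (0:ℝ)) (PLF a) := by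
  refine ⟨convex_Ici 0, ?_⟩
  intro x hx y hy p q hp hq hpq
  simp only [smul_eq_mul]
  refine le_ciInf fun n => ?_
  have hx' := PLF_le_Lf ha hx n
  have hy' := PLF_le_Lf ha hy n
  have key : Lf a n (p * x + q * y) = p * Lf a n x + q * Lf a n y := by
    unfold Lf
    linear_combination (a n * (a (n+1) - a n)⁻¹ - (n:ℝ)) * hpq
  rw [key]
  have := mul_le_mul_of_nonneg_left hx' hp
  have := mul_le_mul_of_nonneg_left hy' hq
  linarith

lemma PLF_lip (ha : Goodb a) {t t' : ℝ} (ht : 0 ≤ t) (h : t ≤ t') :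
    PLF a t' ≤ PLF a t + (t' - t) := by
  have ht' : 0 ≤ t' := ht.trans h
  have : PLF a t' - (t' - t) ≤ PLF a t := by
    refine le_ciInf fun n => ?_
    have h1 : PLF a t' ≤ Lf a n t' := PLF_le_Lf ha ht' n
    have h2 : Lf a n t' ≤ Lf a n t + (t' - t) := by
      unfold Lf
      have hs1 : (a (n+1) - a n)⁻¹ ≤ 1 := by simpa using inv_anti₀ one_pos (ha.g1 n)
      have hs : 0 ≤ (a (n+1) - a n)⁻¹ := (inv_pos.mpr (ha.gpos n)).le
      nlinarith
    linarith
  linarith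

lemma PLF_continuous (ha : Goodb a) : ContinuousOn (PLF a) (Ici (0:ℝ)) := by
  have : LipschitzOnWith 1 (PLF a) (Ici (0:ℝ)) := by
    rw [lipschitzOnWith_iff_dist_le_mul]
    intro x hx y hy
    simp only [ENNReal.coe_one, NNReal.coe_one, one_mul, Real.dist_eq]
    rcases le_total x y with h | h
    · have m1 := PLF_mono ha hx hy h
      have m2 := PLF_lip ha (mem_Ici.mp hx) h
      have e1 : |x - y| = y - x := by rw [abs_sub_comm]; exact abs_of_nonneg (by linarith)
      rw [e1, abs_sub_comm, abs_of_nonneg (by linarith : (0:ℝ) ≤ PLF a y - PLF a x)]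
      linarith
    · have m1 := PLF_mono ha hy hx h
      have m2 := PLF_lip ha (mem_Ici.mp hy) h
      rw [abs_of_nonneg (by linarith : (0:ℝ) ≤ PLF a x - PLF a y), abs_of_nonneg (by linarith : (0:ℝ) ≤ x - y)]
      linarith
  exact this.continuousOn

lemma PLF_unbounded (ha : Goodb a) (M : ℝ) : ∃ r, 0 ≤ r ∧ M ≤ PLF a r := by
  refine ⟨a ⌈M⌉₊, ha.anonneg _, ?_⟩
  rw [PLF_breakpoint ha]
  exact Nat.le_ceil M

lemma PLF_zero_iff (ha : Goodb a) {r : ℝ} (hr : 0 ≤ r) : PLF a r = 0 ↔ r = 0 := by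
  constructor
  · intro h
    by_contra hne
    have hpos : 0 < r := lt_of_le_of_ne hr (Ne.symm hne)
    have := PLF_strictMono ha (self_mem_Ici) (mem_Ici.mpr hr) hpos
    rw [PLF_zero ha, h] at this
    exact lt_irrefl 0 this
  · rintro rfl; exact PLF_zero ha

lemma PLF_subadd (ha : Goodb a) {u v : ℝ} (hu : 0 ≤ u) (hv : 0 ≤ v) :
    PLF a (u + v) ≤ PLF a u + PLF a v := by
  rcases eq_or_lt_of_le (by linarith : (0:ℝ) ≤ u + v) with h0 | hpos
  · have hu0 : u = 0 := by linarith
    have hv0 : v = 0 := by linarith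
    simp [hu0, hv0, PLF_zero ha]
  · have key : ∀ w, 0 ≤ w → w ≤ u + v → (w / (u+v)) * PLF a (u+v) ≤ PLF a w := by
      intro w hw hwle
      have hq0 : 0 ≤ w / (u+v) := div_nonneg hw (by linarith)
      have hq1 : w / (u+v) ≤ 1 := (div_le_one hpos).mpr hwle
      have hc := (PLF_concave ha).2 (self_mem_Ici) (mem_Ici.mpr (by linarith : (0:ℝ) ≤ u + v))
        (by linarith : 0 ≤ 1 - w/(u+v)) hq0 (by ring)
      simp only [smul_eq_mul, mul_zero, zero_add, PLF_zero ha] at hc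
      have harg : (w / (u+v)) * (u+v) = w := by field_simp
      rw [harg] at hc
      linarith
    have k1 := key u hu (by linarith)
    have k2 := key v hv (by linarith)
    have hsum : u / (u+v) + v / (u+v) = 1 := by field_simp
    have : u/(u+v) * PLF a (u+v) + v/(u+v) * PLF a (u+v) = PLF a (u+v) := by
      rw [← add_mul, hsum, one_mul]
    linarith

section Seq

variable (φ Φ : ℝ → ℝ) (hφunb : ∀ M : ℝ, ∃ r, 0 ≤ r ∧ M ≤ φ r)

noncomputable def stepFn : ℝ × ℝ × ℝ × ℝ → ℝ × ℝ × ℝ × ℝ := fun p =>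
  (max (p.1 + p.2.2.1) (hφunb p.2.1).choose,
   max (p.2.1 + p.2.2.2) (Φ (max (p.1 + p.2.2.1) (hφunb p.2.1).choose)),
   max (p.1 + p.2.2.1) (hφunb p.2.1).choose - p.1,
   max (p.2.1 + p.2.2.2) (Φ (max (p.1 + p.2.2.1) (hφunb p.2.1).choose)) - p.2.1)

noncomputable def seqFn (n : ℕ) : ℝ × ℝ × ℝ × ℝ := (stepFn φ Φ hφunb)^[n] (0, 0, 1, 1)

noncomputable def aS (n : ℕ) : ℝ := (seqFn φ Φ hφunb n).1
noncomputable def bS (n : ℕ) : ℝ := (seqFn φ Φ hφunb n).2.1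
noncomputable def gA (n : ℕ) : ℝ := (seqFn φ Φ hφunb n).2.2.1
noncomputable def gB (n : ℕ) : ℝ := (seqFn φ Φ hφunb n).2.2.2

lemma seq_succ (n : ℕ) :
    seqFn φ Φ hφunb (n+1) = stepFn φ Φ hφunb (seqFn φ Φ hφunb n) := by
  unfold seqFn
  rw [Function.iterate_succ_apply']

lemma aS_succ (n : ℕ) :
    aS φ Φ hφunb (n+1) = max (aS φ Φ hφunb n + gA φ Φ hφunb n) (hφunb (bS φ Φ hφunb n)).choose := by
  unfold aS gA bS
  rw [seq_succ]
  rfl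

lemma bS_succ (n : ℕ) :
    bS φ Φ hφunb (n+1) = max (bS φ Φ hφunb n + gB φ Φ hφunb n) (Φ (aS φ Φ hφunb (n+1))) := by
  unfold bS gB
  rw [aS_succ, seq_succ]
  rfl

lemma gA_succ (n : ℕ) : gA φ Φ hφunb (n+1) = aS φ Φ hφunb (n+1) - aS φ Φ hφunb n := by
  unfold gA aS
  rw [seq_succ]
  rfl

lemma gB_succ (n : ℕ) : gB φ Φ hφunb (n+1) = bS φ Φ hφunb (n+1) - bS φ Φ hφunb n := by
  unfold gB bS
  rw [seq_succ]
  rfl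

lemma seq_zero : aS φ Φ hφunb 0 = 0 ∧ bS φ Φ hφunb 0 = 0 ∧ gA φ Φ hφunb 0 = 1 ∧ gB φ Φ hφunb 0 = 1 := by
  refine ⟨rfl, rfl, rfl, rfl⟩

lemma gA_mono_succ (n : ℕ) : gA φ Φ hφunb n ≤ gA φ Φ hφunb (n+1) := by
  rw [gA_succ, aS_succ]
  have := le_max_left (aS φ Φ hφunb n + gA φ Φ hφunb n) (hφunb (bS φ Φ hφunb n)).choose
  linarith

lemma gB_mono_succ (n : ℕ) : gB φ Φ hφunb n ≤ gB φ Φ hφunb (n+1) := by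
  rw [gB_succ, bS_succ]
  have := le_max_left (bS φ Φ hφunb n + gB φ Φ hφunb n) (Φ (aS φ Φ hφunb (n+1)))
  linarith

lemma gA_one (n : ℕ) : 1 ≤ gA φ Φ hφunb n := by
  induction n with
  | zero => exact le_of_eq (seq_zero φ Φ hφunb).2.2.1.symm
  | succ n ih => exact ih.trans (gA_mono_succ φ Φ hφunb n)

lemma gB_one (n : ℕ) : 1 ≤ gB φ Φ hφunb n := by
  induction n with
  | zero => exact le_of_eq (seq_zero φ Φ hφunb).2.2.2.symm
  | succ n ih => exact ih.trans (gB_mono_succ φ Φ hφunb n)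

lemma goodb_aS : Goodb (aS φ Φ hφunb) := by
  refine ⟨(seq_zero φ Φ hφunb).1, fun n => ?_, fun n => ?_⟩
  · rw [← gA_succ]; exact (gA_one φ Φ hφunb (n+1))
  · rw [← gA_succ, ← gA_succ]; exact gA_mono_succ φ Φ hφunb (n+1)

lemma goodb_bS : Goodb (bS φ Φ hφunb) := by
  refine ⟨(seq_zero φ Φ hφunb).2.1, fun n => ?_, fun n => ?_⟩
  · rw [← gB_succ]; exact (gB_one φ Φ hφunb (n+1))
  · rw [← gB_succ, ← gB_succ]; exact gB_mono_succ φ Φ hφunb (n+1)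

lemma coupling_low (hφmono : MonotoneOn φ (Ici (0:ℝ))) (n : ℕ) :
    bS φ Φ hφunb n ≤ φ (aS φ Φ hφunb (n+1)) := by
  obtain ⟨hr0, hrφ⟩ := (hφunb (bS φ Φ hφunb n)).choose_spec
  have h1 : (hφunb (bS φ Φ hφunb n)).choose ≤ aS φ Φ hφunb (n+1) := by
    rw [aS_succ]; exact le_max_right _ _
  have h2 : (0:ℝ) ≤ aS φ Φ hφunb (n+1) := (goodb_aS φ Φ hφunb).anonneg (n+1)
  exact hrφ.trans (hφmono (mem_Ici.mpr hr0) (mem_Ici.mpr h2) h1)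

lemma coupling_high (n : ℕ) : Φ (aS φ Φ hφunb (n+1)) ≤ bS φ Φ hφunb (n+1) := by
  rw [bS_succ]; exact le_max_right _ _

end Seq

end Stmt12Aux


lemma PLF_isMetric {Z : Type*} [MetricSpace Z] (c : ℕ → ℝ) (hc : Stmt12Aux.Goodb c) :
    IsMetric (fun z z' : Z => Stmt12Aux.PLF c (dist z z')) := by
  refine ⟨fun x y => Stmt12Aux.PLF_nonneg hc dist_nonneg,
    fun x y => ?_, fun x y => by simp [dist_comm], fun x y z => ?_⟩
  · rw [Stmt12Aux.PLF_zero_iff hc dist_nonneg, dist_eq_zero]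
  · calc Stmt12Aux.PLF c (dist x z)
        ≤ Stmt12Aux.PLF c (dist x y + dist y z) := by
          refine Stmt12Aux.PLF_mono hc (Set.mem_Ici.mpr dist_nonneg)
            (Set.mem_Ici.mpr (by positivity)) (dist_triangle x y z)
      _ ≤ Stmt12Aux.PLF c (dist x y) + Stmt12Aux.PLF c (dist y z) :=
          Stmt12Aux.PLF_subadd hc dist_nonneg dist_nonneg

theorem stmt_12 (X Y : Type*) [MetricSpace X] [MetricSpace Y] (f : X → Y)
    (φ Φ : ℝ → ℝ)
    (hφ0 : ∀ r, 0 ≤ r → 0 ≤ φ r) (hφmono : MonotoneOn φ (Set.Ici (0 : ℝ)))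
    (hφunb : ∀ M : ℝ, ∃ r, 0 ≤ r ∧ M ≤ φ r)
    (hΦ0 : ∀ r, 0 ≤ r → 0 ≤ Φ r) (hΦmono : MonotoneOn Φ (Set.Ici (0 : ℝ)))
    (hΦunb : ∀ M : ℝ, ∃ r, 0 ≤ r ∧ M ≤ Φ r)
    (hcoarse : ∀ x x' : X,
      φ (dist x x') ≤ dist (f x) (f x') ∧ dist (f x) (f x') ≤ Φ (dist x x')) :
    ∃ cX cY : ℝ → ℝ,
      (∀ r, 0 ≤ r → 0 ≤ cX r) ∧ ConcaveOn ℝ (Set.Ici (0 : ℝ)) cX ∧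
        StrictMonoOn cX (Set.Ici (0 : ℝ)) ∧ ContinuousOn cX (Set.Ici (0 : ℝ)) ∧
        (∀ M : ℝ, ∃ r, 0 ≤ r ∧ M ≤ cX r) ∧
        (∀ r, 0 ≤ r → (cX r = 0 ↔ r = 0)) ∧
      (∀ r, 0 ≤ r → 0 ≤ cY r) ∧ ConcaveOn ℝ (Set.Ici (0 : ℝ)) cY ∧
        StrictMonoOn cY (Set.Ici (0 : ℝ)) ∧ ContinuousOn cY (Set.Ici (0 : ℝ)) ∧
        (∀ M : ℝ, ∃ r, 0 ≤ r ∧ M ≤ cY r) ∧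
        (∀ r, 0 ≤ r → (cY r = 0 ↔ r = 0)) ∧
      IsMetric (fun x x' : X => cX (dist x x')) ∧
      IsMetric (fun y y' : Y => cY (dist y y')) ∧
      (∀ x x' : X,
        cX (dist x x') - 2 ≤ cY (dist (f x) (f x')) ∧
        cY (dist (f x) (f x')) ≤ cX (dist x x') + 1) := by
  classical
  set a := Stmt12Aux.aS φ Φ hφunb with ha_def
  set b := Stmt12Aux.bS φ Φ hφunb with hb_def
  have hga : Stmt12Aux.Goodb a := Stmt12Aux.goodb_aS φ Φ hφunb
  have hgb : Stmt12Aux.Goodb b := Stmt12Aux.goodb_bS φ Φ hφunb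
  have metricX : IsMetric (fun z z' : X => Stmt12Aux.PLF a (dist z z')) := PLF_isMetric a hga
  have metricY : IsMetric (fun z z' : Y => Stmt12Aux.PLF b (dist z z')) := PLF_isMetric b hgb
  refine ⟨Stmt12Aux.PLF a, Stmt12Aux.PLF b,
    fun r hr => Stmt12Aux.PLF_nonneg hga hr, Stmt12Aux.PLF_concave hga,
    Stmt12Aux.PLF_strictMono hga, Stmt12Aux.PLF_continuous hga,
    Stmt12Aux.PLF_unbounded hga, fun r hr => Stmt12Aux.PLF_zero_iff hga hr,
    fun r hr => Stmt12Aux.PLF_nonneg hgb hr, Stmt12Aux.PLF_concave hgb,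
    Stmt12Aux.PLF_strictMono hgb, Stmt12Aux.PLF_continuous hgb,
    Stmt12Aux.PLF_unbounded hgb, fun r hr => Stmt12Aux.PLF_zero_iff hgb hr,
    ?_, ?_, ?_⟩
  · exact metricX
  · exact metricY
  intro x x'
  set dX := dist x x' with hdX
  set dY := dist (f x) (f x') with hdY
  have hdX0 : (0:ℝ) ≤ dX := dist_nonneg
  have hdY0 : (0:ℝ) ≤ dY := dist_nonneg
  obtain ⟨n, h1, h2⟩ := Stmt12Aux.cover hga hdX0
  have hXlow : (n:ℝ) ≤ Stmt12Aux.PLF a dX := by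
    rw [← Stmt12Aux.PLF_breakpoint hga n]
    exact Stmt12Aux.PLF_mono hga (Set.mem_Ici.mpr (hga.anonneg n)) (Set.mem_Ici.mpr hdX0) h1
  have hXhigh : Stmt12Aux.PLF a dX ≤ (n:ℝ) + 1 := by
    have := Stmt12Aux.PLF_mono hga (Set.mem_Ici.mpr hdX0)
      (Set.mem_Ici.mpr (hga.anonneg (n+1))) h2
    rw [Stmt12Aux.PLF_breakpoint hga (n+1)] at this
    push_cast at this
    linarith
  obtain ⟨hclow, hchigh⟩ := hcoarse x x'
  constructor
  · -- lower bound
    cases n with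
    | zero =>
      have := Stmt12Aux.PLF_nonneg hgb hdY0
      push_cast at hXhigh
      linarith
    | succ m =>
      have hbm : b m ≤ dY := by
        have c1 : b m ≤ φ (a (m+1)) := Stmt12Aux.coupling_low φ Φ hφunb hφmono m
        have c2 : φ (a (m+1)) ≤ φ dX :=
          hφmono (Set.mem_Ici.mpr (hga.anonneg (m+1))) (Set.mem_Ici.mpr hdX0) h1
        linarith
      have hY : (m:ℝ) ≤ Stmt12Aux.PLF b dY := by
        rw [← Stmt12Aux.PLF_breakpoint hgb m]
        exact Stmt12Aux.PLF_mono hgb (Set.mem_Ici.mpr (hgb.anonneg m)) (Set.mem_Ici.mpr hdY0) hbm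
      push_cast at hXhigh
      linarith
  · -- upper bound
    have hbn : dY ≤ b (n+1) := by
      have c1 : Φ dX ≤ Φ (a (n+1)) :=
        hΦmono (Set.mem_Ici.mpr hdX0) (Set.mem_Ici.mpr (hga.anonneg (n+1))) h2
      have c2 : Φ (a (n+1)) ≤ b (n+1) := Stmt12Aux.coupling_high φ Φ hφunb n
      linarith
    have hY : Stmt12Aux.PLF b dY ≤ (n:ℝ) + 1 := by
      have := Stmt12Aux.PLF_mono hgb (Set.mem_Ici.mpr hdY0)
        (Set.mem_Ici.mpr (hgb.anonneg (n+1))) hbn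
      rw [Stmt12Aux.PLF_breakpoint hgb (n+1)] at this
      push_cast at this
      linarith
    linarith
end

section
/- Let (X,d_X), (Y,d_Y) be metric spaces and f : X → Y a coarse equivalence: there exist nondecreasing unbounded functions φ, Φ : [0,∞) → [0,∞) with φ(d_X(x,x')) ≤ d_Y(f(x),f(x')) ≤ Φ(d_X(x,x')) for all x, x' ∈ X. Then for every ε > 0 there exist functions c_X, c_Y : [0,∞) → [0,∞), each concave, strictly increasing, continuous, unbounded, and vanishing exactly at 0, such that, with d_X' = c_X ∘ d_X and d_Y' = c_Y ∘ d_Y (which are metrics), for all x, x' ∈ X: |d_Y'(f(x), f(x')) − d_X'(x,x')| ≤ ε. -/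
noncomputable def Lfun (a : ℕ → ℝ) (ε : ℝ) (n : ℕ) (t : ℝ) : ℝ :=
  ε/2 * (n + (t - a n)/(a (n+1) - a n))

noncomputable def Ffun (a : ℕ → ℝ) (ε : ℝ) (t : ℝ) : ℝ := ⨅ n, Lfun a ε n t

section lemmas

variable {a : ℕ → ℝ} {ε : ℝ}

lemma gap_pos (hgap : ∀ n, a n + 1 ≤ a (n+1)) (n : ℕ) : 0 < a (n+1) - a n := by
  have := hgap n; linarith

lemma a_strictMono (hgap : ∀ n, a n + 1 ≤ a (n+1)) : StrictMono a :=
  strictMono_nat_of_lt_succ (fun n => by have := hgap n; linarith)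

lemma a_ge (hgap : ∀ n, a n + 1 ≤ a (n+1)) (ha0 : a 0 = 0) (n : ℕ) : (n : ℝ) ≤ a n := by
  induction n with
  | zero => simp [ha0]
  | succ k ih => have := hgap k; push_cast; linarith

lemma a_nonneg (hgap : ∀ n, a n + 1 ≤ a (n+1)) (ha0 : a 0 = 0) (n : ℕ) : 0 ≤ a n :=
  le_trans (by positivity) (a_ge hgap ha0 n)

lemma a_le (hgap : ∀ n, a n + 1 ≤ a (n+1))
    (hgm : ∀ n, a (n+1) - a n ≤ a (n+2) - a (n+1)) (ha0 : a 0 = 0) (n : ℕ) :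
    a n ≤ n * (a (n+1) - a n) := by
  induction n with
  | zero => simp [ha0]
  | succ k ih =>
    have h1 := hgm k
    have h2 := gap_pos hgap k
    have hk : (0:ℝ) ≤ (k:ℝ) := Nat.cast_nonneg k
    push_cast
    nlinarith

lemma Lfun_eq (hgap : ∀ n, a n + 1 ≤ a (n+1)) (n : ℕ) (t : ℝ) :
    Lfun a ε n t = ε/2 * n + ε/2/(a (n+1) - a n) * (t - a n) := by
  have h := (gap_pos hgap n).ne'
  unfold Lfun; field_simp

lemma Lfun_lb (hgap : ∀ n, a n + 1 ≤ a (n+1))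
    (hgm : ∀ n, a (n+1) - a n ≤ a (n+2) - a (n+1)) (ha0 : a 0 = 0) (hε : 0 < ε)
    (n : ℕ) (t : ℝ) : min 0 (ε/2 * t) ≤ Lfun a ε n t := by
  have hg := gap_pos hgap n
  have hs : 0 < ε/2/(a (n+1)-a n) := by positivity
  have h1 : ε/2/(a (n+1)-a n) * a n ≤ ε/2 * n := by
    calc ε/2/(a (n+1)-a n) * a n ≤ ε/2/(a (n+1)-a n) * (n * (a (n+1) - a n)) :=
      mul_le_mul_of_nonneg_left (a_le hgap hgm ha0 n) hs.le
    _ = ε/2 * n := by field_simp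
  have hsle : ε/2/(a (n+1)-a n) ≤ ε/2 :=
    div_le_self (by linarith) (by have := hgap n; have := a_nonneg hgap ha0 n; linarith)
  rw [Lfun_eq hgap]
  rcases le_or_gt 0 t with ht | ht
  · have h2 : 0 ≤ ε/2/(a (n+1)-a n) * t := by positivity
    calc min 0 (ε/2*t) ≤ 0 := min_le_left _ _
      _ ≤ _ := by nlinarith
  · calc min 0 (ε/2*t) ≤ ε/2*t := min_le_right _ _
      _ ≤ _ := by nlinarith [mul_le_mul_of_nonpos_right hsle ht.le]

lemma Lfun_bdd (hgap : ∀ n, a n + 1 ≤ a (n+1))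
    (hgm : ∀ n, a (n+1) - a n ≤ a (n+2) - a (n+1)) (ha0 : a 0 = 0) (hε : 0 < ε)
    (t : ℝ) : BddBelow (Set.range fun n => Lfun a ε n t) := by
  refine ⟨min 0 (ε/2*t), ?_⟩
  rintro x ⟨n, rfl⟩
  exact Lfun_lb hgap hgm ha0 hε n t

lemma Lfun_succ_sub (hgap : ∀ n, a n + 1 ≤ a (n+1)) (n : ℕ) (t : ℝ) :
    Lfun a ε (n+1) t - Lfun a ε n t =
      (ε/2/(a (n+2) - a (n+1)) - ε/2/(a (n+1) - a n)) * (t - a (n+1)) := by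
  have h1 := (gap_pos hgap n).ne'
  have h2 := (gap_pos hgap (n+1)).ne'
  unfold Lfun
  push_cast
  field_simp
  ring

lemma slope_anti (hgap : ∀ n, a n + 1 ≤ a (n+1))
    (hgm : ∀ n, a (n+1) - a n ≤ a (n+2) - a (n+1)) (hε : 0 < ε) (n : ℕ) :
    ε/2/(a (n+2) - a (n+1)) ≤ ε/2/(a (n+1) - a n) := by
  exact div_le_div_of_nonneg_left (by linarith) (gap_pos hgap n) (hgm n)

lemma Lfun_le_succ (hgap : ∀ n, a n + 1 ≤ a (n+1))
    (hgm : ∀ n, a (n+1) - a n ≤ a (n+2) - a (n+1)) (hε : 0 < ε)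
    (n : ℕ) {t : ℝ} (ht : t ≤ a (n+1)) : Lfun a ε n t ≤ Lfun a ε (n+1) t := by
  have h := Lfun_succ_sub (ε := ε) hgap n t
  have hs := slope_anti hgap hgm hε n
  nlinarith

lemma Lfun_succ_le (hgap : ∀ n, a n + 1 ≤ a (n+1))
    (hgm : ∀ n, a (n+1) - a n ≤ a (n+2) - a (n+1)) (hε : 0 < ε)
    (n : ℕ) {t : ℝ} (ht : a (n+1) ≤ t) : Lfun a ε (n+1) t ≤ Lfun a ε n t := by
  have h := Lfun_succ_sub (ε := ε) hgap n t
  have hs := slope_anti hgap hgm hε n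
  nlinarith

lemma Lfun_up (hgap : ∀ n, a n + 1 ≤ a (n+1))
    (hgm : ∀ n, a (n+1) - a n ≤ a (n+2) - a (n+1)) (hε : 0 < ε)
    (n k : ℕ) {t : ℝ} (h : t ≤ a (n+1)) : Lfun a ε n t ≤ Lfun a ε (n+k) t := by
  induction k with
  | zero => simp
  | succ j ih =>
    refine le_trans ih ?_
    have h2 : t ≤ a (n + j + 1) := le_trans h ((a_strictMono hgap).monotone (by omega))
    exact Lfun_le_succ hgap hgm hε (n+j) h2

lemma Lfun_down (hgap : ∀ n, a n + 1 ≤ a (n+1))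
    (hgm : ∀ n, a (n+1) - a n ≤ a (n+2) - a (n+1)) (hε : 0 < ε)
    (m k : ℕ) {t : ℝ} (h : a (m+k) ≤ t) : Lfun a ε (m+k) t ≤ Lfun a ε m t := by
  induction k with
  | zero => simp
  | succ j ih =>
    have h2 : a (m+j) ≤ t := le_trans ((a_strictMono hgap).monotone (by omega)) h
    have h3 : Lfun a ε (m+j+1) t ≤ Lfun a ε (m+j) t :=
      Lfun_succ_le hgap hgm hε (m+j) h
    exact le_trans h3 (ih h2)

lemma Lfun_min (hgap : ∀ n, a n + 1 ≤ a (n+1))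
    (hgm : ∀ n, a (n+1) - a n ≤ a (n+2) - a (n+1)) (hε : 0 < ε)
    {t : ℝ} {n : ℕ} (h1 : a n ≤ t) (h2 : t ≤ a (n+1)) (m : ℕ) :
    Lfun a ε n t ≤ Lfun a ε m t := by
  rcases le_or_gt n m with h | h
  · obtain ⟨k, rfl⟩ := Nat.exists_eq_add_of_le h
    exact Lfun_up hgap hgm hε n k h2
  · obtain ⟨k, hk⟩ := Nat.exists_eq_add_of_le h.le
    subst hk
    exact Lfun_down hgap hgm hε m k h1

lemma Ffun_piece (hgap : ∀ n, a n + 1 ≤ a (n+1))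
    (hgm : ∀ n, a (n+1) - a n ≤ a (n+2) - a (n+1)) (ha0 : a 0 = 0) (hε : 0 < ε)
    {t : ℝ} {n : ℕ} (h1 : a n ≤ t) (h2 : t ≤ a (n+1)) :
    Ffun a ε t = Lfun a ε n t :=
  le_antisymm (ciInf_le (Lfun_bdd hgap hgm ha0 hε t) n)
    (le_ciInf (Lfun_min hgap hgm hε h1 h2))

lemma exists_node (hgap : ∀ n, a n + 1 ≤ a (n+1)) (ha0 : a 0 = 0)
    {t : ℝ} (ht : 0 ≤ t) : ∃ n, a n ≤ t ∧ t ≤ a (n+1) := by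
  classical
  have hex : ∃ m, t < a m := by
    obtain ⟨m, hm⟩ := exists_nat_gt t
    exact ⟨m, lt_of_lt_of_le hm (a_ge hgap ha0 m)⟩
  have hm : t < a (Nat.find hex) := Nat.find_spec hex
  rcases Nat.eq_zero_or_pos (Nat.find hex) with h0 | h0
  · rw [h0, ha0] at hm; linarith
  · obtain ⟨k, hk⟩ := Nat.exists_eq_succ_of_ne_zero h0.ne'
    refine ⟨k, ?_, ?_⟩
    · have := Nat.find_min hex (m := k) (by omega)
      linarith [not_lt.1 this]
    · rw [hk] at hm; exact hm.le

lemma Ffun_node (hgap : ∀ n, a n + 1 ≤ a (n+1))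
    (hgm : ∀ n, a (n+1) - a n ≤ a (n+2) - a (n+1)) (ha0 : a 0 = 0) (hε : 0 < ε)
    (n : ℕ) : Ffun a ε (a n) = ε/2 * n := by
  rw [Ffun_piece hgap hgm ha0 hε (le_refl (a n)) ((a_strictMono hgap).monotone (by omega))]
  unfold Lfun
  rw [sub_self, zero_div, add_zero]

lemma Ffun_zero (hgap : ∀ n, a n + 1 ≤ a (n+1))
    (hgm : ∀ n, a (n+1) - a n ≤ a (n+2) - a (n+1)) (ha0 : a 0 = 0) (hε : 0 < ε) :
    Ffun a ε 0 = 0 := by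
  have := Ffun_node hgap hgm ha0 hε 0
  rw [ha0] at this
  simpa using this

lemma Ffun_nonneg (hgap : ∀ n, a n + 1 ≤ a (n+1))
    (hgm : ∀ n, a (n+1) - a n ≤ a (n+2) - a (n+1)) (ha0 : a 0 = 0) (hε : 0 < ε)
    {t : ℝ} (ht : 0 ≤ t) : 0 ≤ Ffun a ε t := by
  refine le_ciInf fun n => le_trans ?_ (Lfun_lb hgap hgm ha0 hε n t)
  have : (0:ℝ) ≤ ε/2*t := by positivity
  simp [min_eq_left this]

lemma Ffun_strictMono (hgap : ∀ n, a n + 1 ≤ a (n+1))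
    (hgm : ∀ n, a (n+1) - a n ≤ a (n+2) - a (n+1)) (ha0 : a 0 = 0) (hε : 0 < ε) :
    StrictMonoOn (Ffun a ε) (Set.Ici 0) := by
  intro s hs t ht hst
  obtain ⟨n, h1, h2⟩ := exists_node hgap ha0 (Set.mem_Ici.1 ht)
  rw [Ffun_piece hgap hgm ha0 hε h1 h2]
  have hFs : Ffun a ε s ≤ Lfun a ε n s := ciInf_le (Lfun_bdd hgap hgm ha0 hε s) n
  have hlt : Lfun a ε n s < Lfun a ε n t := by
    rw [Lfun_eq hgap, Lfun_eq hgap]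
    have hg := gap_pos hgap n
    have hsl : 0 < ε/2/(a (n+1)-a n) := by positivity
    nlinarith
  linarith

lemma Ffun_lip (hgap : ∀ n, a n + 1 ≤ a (n+1))
    (hgm : ∀ n, a (n+1) - a n ≤ a (n+2) - a (n+1)) (ha0 : a 0 = 0) (hε : 0 < ε)
    (s t : ℝ) : Ffun a ε t ≤ Ffun a ε s + ε/2 * |t - s| := by
  have key : ∀ n, Ffun a ε t - ε/2 * |t - s| ≤ Lfun a ε n s := by
    intro n
    have h1 : Lfun a ε n t ≤ Lfun a ε n s + ε/2*|t-s| := by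
      rw [Lfun_eq hgap, Lfun_eq hgap]
      have hg := gap_pos hgap n
      have hsle : ε/2/(a (n+1)-a n) ≤ ε/2 :=
        div_le_self (by linarith) (by have := hgap n; have := a_nonneg hgap ha0 n; linarith)
      have hsl : 0 < ε/2/(a (n+1)-a n) := by positivity
      have habs : t - s ≤ |t - s| := le_abs_self _
      nlinarith [abs_nonneg (t - s)]
    have h2 : Ffun a ε t ≤ Lfun a ε n t := ciInf_le (Lfun_bdd hgap hgm ha0 hε t) n
    linarith
  have := le_ciInf key
  have h3 : Ffun a ε t - ε/2 * |t - s| ≤ Ffun a ε s := this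
  linarith

lemma Ffun_cont (hgap : ∀ n, a n + 1 ≤ a (n+1))
    (hgm : ∀ n, a (n+1) - a n ≤ a (n+2) - a (n+1)) (ha0 : a 0 = 0) (hε : 0 < ε) :
    ContinuousOn (Ffun a ε) (Set.Ici 0) := by
  have hlip : LipschitzWith (Real.toNNReal (ε/2)) (Ffun a ε) := by
    apply LipschitzWith.of_dist_le_mul
    intro s t
    rw [Real.dist_eq, Real.dist_eq, Real.coe_toNNReal _ (by linarith)]
    rw [abs_sub_le_iff]
    constructor
    · have := Ffun_lip hgap hgm ha0 hε t s
      linarith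
    · have := Ffun_lip hgap hgm ha0 hε s t
      rw [abs_sub_comm] at this
      linarith
  exact hlip.continuous.continuousOn

lemma Lfun_affine (hgap : ∀ n, a n + 1 ≤ a (n+1)) (n : ℕ) (x y p q : ℝ) (hpq : p + q = 1) :
    Lfun a ε n (p*x + q*y) = p * Lfun a ε n x + q * Lfun a ε n y := by
  have h := (gap_pos hgap n).ne'
  have hq : q = 1 - p := by linarith
  subst hq
  unfold Lfun
  field_simp
  ring

lemma Ffun_concave (hgap : ∀ n, a n + 1 ≤ a (n+1))
    (hgm : ∀ n, a (n+1) - a n ≤ a (n+2) - a (n+1)) (ha0 : a 0 = 0) (hε : 0 < ε) :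
    ConcaveOn ℝ (Set.Ici 0) (Ffun a ε) := by
  refine ⟨convex_Ici 0, ?_⟩
  intro x _ y _ p q hp hq hpq
  simp only [smul_eq_mul]
  refine le_ciInf fun n => ?_
  rw [Lfun_affine hgap n x y p q hpq]
  exact add_le_add
    (mul_le_mul_of_nonneg_left (ciInf_le (Lfun_bdd hgap hgm ha0 hε x) n) hp)
    (mul_le_mul_of_nonneg_left (ciInf_le (Lfun_bdd hgap hgm ha0 hε y) n) hq)

lemma Ffun_subadd (hgap : ∀ n, a n + 1 ≤ a (n+1))
    (hgm : ∀ n, a (n+1) - a n ≤ a (n+2) - a (n+1)) (ha0 : a 0 = 0) (hε : 0 < ε)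
    {s t : ℝ} (hs : 0 ≤ s) (ht : 0 ≤ t) :
    Ffun a ε (s + t) ≤ Ffun a ε s + Ffun a ε t := by
  rcases eq_or_lt_of_le (by linarith : (0:ℝ) ≤ s + t) with h | h
  · have hs0 : s = 0 := by linarith
    have ht0 : t = 0 := by linarith
    simp [hs0, ht0, Ffun_zero hgap hgm ha0 hε]
  · have hc := Ffun_concave hgap hgm ha0 hε
    have key : ∀ u, 0 ≤ u → u ≤ s + t → u/(s+t) * Ffun a ε (s+t) ≤ Ffun a ε u := by
      intro u hu hule
      have hp : 0 ≤ u/(s+t) := by positivity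
      have hq : 0 ≤ 1 - u/(s+t) := by
        rw [sub_nonneg, div_le_one h]; exact hule
      have hpq : u/(s+t) + (1 - u/(s+t)) = 1 := by ring
      have := hc.2 (Set.mem_Ici.2 (le_of_lt h)) (Set.mem_Ici.2 (le_refl (0:ℝ)))
        hp hq hpq
      simp only [smul_eq_mul, mul_zero, add_zero, smul_zero] at this
      rw [Ffun_zero hgap hgm ha0 hε, mul_zero, add_zero] at this
      have harg : u/(s+t) * (s+t) = u := div_mul_cancel₀ u h.ne'
      rwa [harg] at this
    have k1 := key s hs (by linarith)
    have k2 := key t ht (by linarith)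
    have hsum : s/(s+t) * Ffun a ε (s+t) + t/(s+t) * Ffun a ε (s+t) = Ffun a ε (s+t) := by
      field_simp
    linarith

lemma Ffun_unbounded (hgap : ∀ n, a n + 1 ≤ a (n+1))
    (hgm : ∀ n, a (n+1) - a n ≤ a (n+2) - a (n+1)) (ha0 : a 0 = 0) (hε : 0 < ε)
    (M : ℝ) : ∃ r, 0 ≤ r ∧ M ≤ Ffun a ε r := by
  obtain ⟨n, hn⟩ := exists_nat_ge (2*M/ε)
  refine ⟨a n, a_nonneg hgap ha0 n, ?_⟩
  rw [Ffun_node hgap hgm ha0 hε n]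
  rw [div_le_iff₀ hε] at hn
  linarith

lemma Ffun_zero_iff (hgap : ∀ n, a n + 1 ≤ a (n+1))
    (hgm : ∀ n, a (n+1) - a n ≤ a (n+2) - a (n+1)) (ha0 : a 0 = 0) (hε : 0 < ε)
    {r : ℝ} (hr : 0 ≤ r) : Ffun a ε r = 0 ↔ r = 0 := by
  constructor
  · intro h
    by_contra hr0
    have hpos : 0 < r := lt_of_le_of_ne hr (Ne.symm hr0)
    have := Ffun_strictMono hgap hgm ha0 hε (Set.mem_Ici.2 (le_refl (0:ℝ)))
      (Set.mem_Ici.2 hr) hpos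
    rw [Ffun_zero hgap hgm ha0 hε, h] at this
    exact lt_irrefl 0 this
  · intro h; rw [h]; exact Ffun_zero hgap hgm ha0 hε

lemma isMetric_comp {Z : Type*} [MetricSpace Z] (c : ℝ → ℝ)
    (hc0 : c 0 = 0) (hmono : StrictMonoOn c (Set.Ici 0))
    (hsub : ∀ s t : ℝ, 0 ≤ s → 0 ≤ t → c (s+t) ≤ c s + c t)
    (hnn : ∀ r, 0 ≤ r → 0 ≤ c r)
    (hziff : ∀ r, 0 ≤ r → (c r = 0 ↔ r = 0)) :
    IsMetric (fun z z' : Z => c (dist z z')) := by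
  refine ⟨fun x y => hnn _ dist_nonneg, fun x y => ?_, fun x y => ?_,
    fun x y z => ?_⟩
  · show c (dist x y) = 0 ↔ x = y
    rw [hziff _ dist_nonneg, dist_eq_zero]
  · show c (dist x y) = c (dist y x)
    rw [dist_comm]
  · show c (dist x z) ≤ c (dist x y) + c (dist y z)
    have h1 : c (dist x z) ≤ c (dist x y + dist y z) := by
      rcases eq_or_lt_of_le (dist_triangle x y z) with h | h
      · rw [h]
      · exact le_of_lt (hmono (Set.mem_Ici.2 dist_nonneg)
          (Set.mem_Ici.2 (by positivity)) h)
    exact le_trans h1 (hsub _ _ dist_nonneg dist_nonneg)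

end lemmas

noncomputable def pairSeq (g Φ : ℝ → ℝ) : ℕ → ℝ × ℝ
  | 0 => (0, 0)
  | 1 => (1, 1)
  | n+2 => (max (g ((pairSeq g Φ (n+1)).2)) (2*(pairSeq g Φ (n+1)).1 - (pairSeq g Φ n).1),
            max (Φ ((pairSeq g Φ (n+1)).1)) (2*(pairSeq g Φ (n+1)).2 - (pairSeq g Φ n).2))

theorem stmt_13 (X Y : Type*) [MetricSpace X] [MetricSpace Y] (f : X → Y)
    (φ Φ : ℝ → ℝ)
    (hφ0 : ∀ r, 0 ≤ r → 0 ≤ φ r) (hφmono : MonotoneOn φ (Set.Ici (0 : ℝ)))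
    (hφunb : ∀ M : ℝ, ∃ r, 0 ≤ r ∧ M ≤ φ r)
    (hΦ0 : ∀ r, 0 ≤ r → 0 ≤ Φ r) (hΦmono : MonotoneOn Φ (Set.Ici (0 : ℝ)))
    (hΦunb : ∀ M : ℝ, ∃ r, 0 ≤ r ∧ M ≤ Φ r)
    (hcoarse : ∀ x x' : X,
      φ (dist x x') ≤ dist (f x) (f x') ∧ dist (f x) (f x') ≤ Φ (dist x x')) :
    ∀ ε > (0 : ℝ), ∃ cX cY : ℝ → ℝ,
      (∀ r, 0 ≤ r → 0 ≤ cX r) ∧ ConcaveOn ℝ (Set.Ici (0 : ℝ)) cX ∧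
        StrictMonoOn cX (Set.Ici (0 : ℝ)) ∧ ContinuousOn cX (Set.Ici (0 : ℝ)) ∧
        (∀ M : ℝ, ∃ r, 0 ≤ r ∧ M ≤ cX r) ∧
        (∀ r, 0 ≤ r → (cX r = 0 ↔ r = 0)) ∧
      (∀ r, 0 ≤ r → 0 ≤ cY r) ∧ ConcaveOn ℝ (Set.Ici (0 : ℝ)) cY ∧
        StrictMonoOn cY (Set.Ici (0 : ℝ)) ∧ ContinuousOn cY (Set.Ici (0 : ℝ)) ∧
        (∀ M : ℝ, ∃ r, 0 ≤ r ∧ M ≤ cY r) ∧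
        (∀ r, 0 ≤ r → (cY r = 0 ↔ r = 0)) ∧
      IsMetric (fun x x' : X => cX (dist x x')) ∧
      IsMetric (fun y y' : Y => cY (dist y y')) ∧
      (∀ x x' : X, |cY (dist (f x) (f x')) - cX (dist x x')| ≤ ε) := by
  intro ε hε
  choose g hg0 hgφ using hφunb
  set A : ℕ → ℝ := fun n => (pairSeq g Φ n).1 with hA
  set B : ℕ → ℝ := fun n => (pairSeq g Φ n).2 with hB
  have hA0 : A 0 = 0 := rfl
  have hA1 : A 1 = 1 := rfl
  have hB0 : B 0 = 0 := rfl
  have hB1 : B 1 = 1 := rfl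
  have hArec : ∀ n, A (n+2) = max (g (B (n+1))) (2*A (n+1) - A n) := fun n => rfl
  have hBrec : ∀ n, B (n+2) = max (Φ (A (n+1))) (2*B (n+1) - B n) := fun n => rfl
  have hAgap : ∀ n, A n + 1 ≤ A (n+1) := by
    intro n
    induction n with
    | zero => rw [hA0, hA1]; norm_num
    | succ k ih =>
      have h1 : 2*A (k+1) - A k ≤ A (k+2) := by rw [hArec k]; exact le_max_right _ _
      linarith
  have hBgap : ∀ n, B n + 1 ≤ B (n+1) := by
    intro n
    induction n with
    | zero => rw [hB0, hB1]; norm_num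
    | succ k ih =>
      have h1 : 2*B (k+1) - B k ≤ B (k+2) := by rw [hBrec k]; exact le_max_right _ _
      linarith
  have hAgm : ∀ n, A (n+1) - A n ≤ A (n+2) - A (n+1) := by
    intro n
    have h1 : 2*A (n+1) - A n ≤ A (n+2) := by rw [hArec n]; exact le_max_right _ _
    linarith
  have hBgm : ∀ n, B (n+1) - B n ≤ B (n+2) - B (n+1) := by
    intro n
    have h1 : 2*B (n+1) - B n ≤ B (n+2) := by rw [hBrec n]; exact le_max_right _ _
    linarith
  have hkey1 : ∀ m, B m ≤ φ (A (m+1)) := by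
    intro m
    match m with
    | 0 =>
      rw [hB0, hA1]
      exact hφ0 1 (by norm_num)
    | k+1 =>
      have h1 : g (B (k+1)) ≤ A (k+2) := by rw [hArec k]; exact le_max_left _ _
      have h2 : φ (g (B (k+1))) ≤ φ (A (k+2)) :=
        hφmono (Set.mem_Ici.2 (hg0 _)) (Set.mem_Ici.2 (a_nonneg hAgap hA0 (k+2))) h1
      exact le_trans (hgφ _) h2
  have hkey2 : ∀ n, Φ (A (n+1)) ≤ B (n+2) := by
    intro n; rw [hBrec n]; exact le_max_left _ _
  refine ⟨Ffun A ε, Ffun B ε,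
    fun r hr => Ffun_nonneg hAgap hAgm hA0 hε hr,
    Ffun_concave hAgap hAgm hA0 hε,
    Ffun_strictMono hAgap hAgm hA0 hε,
    Ffun_cont hAgap hAgm hA0 hε,
    Ffun_unbounded hAgap hAgm hA0 hε,
    fun r hr => Ffun_zero_iff hAgap hAgm hA0 hε hr,
    fun r hr => Ffun_nonneg hBgap hBgm hB0 hε hr,
    Ffun_concave hBgap hBgm hB0 hε,
    Ffun_strictMono hBgap hBgm hB0 hε,
    Ffun_cont hBgap hBgm hB0 hε,
    Ffun_unbounded hBgap hBgm hB0 hε,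
    fun r hr => Ffun_zero_iff hBgap hBgm hB0 hε hr,
    isMetric_comp _ (Ffun_zero hAgap hAgm hA0 hε) (Ffun_strictMono hAgap hAgm hA0 hε)
      (fun s t hs ht => Ffun_subadd hAgap hAgm hA0 hε hs ht)
      (fun r hr => Ffun_nonneg hAgap hAgm hA0 hε hr)
      (fun r hr => Ffun_zero_iff hAgap hAgm hA0 hε hr),
    isMetric_comp _ (Ffun_zero hBgap hBgm hB0 hε) (Ffun_strictMono hBgap hBgm hB0 hε)
      (fun s t hs ht => Ffun_subadd hBgap hBgm hB0 hε hs ht)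
      (fun r hr => Ffun_nonneg hBgap hBgm hB0 hε hr)
      (fun r hr => Ffun_zero_iff hBgap hBgm hB0 hε hr),
    ?_⟩
  intro x x'
  set s : ℝ := dist x x' with hsdef
  set t : ℝ := dist (f x) (f x') with htdef
  have hs0 : (0:ℝ) ≤ s := dist_nonneg
  have ht0 : (0:ℝ) ≤ t := dist_nonneg
  obtain ⟨hc1, hc2⟩ := hcoarse x x'
  obtain ⟨n, h1, h2⟩ := exists_node hAgap hA0 hs0
  have monoA := (Ffun_strictMono hAgap hAgm hA0 hε).monotoneOn
  have monoB := (Ffun_strictMono hBgap hBgm hB0 hε).monotoneOn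
  have hAn0 : (0:ℝ) ≤ A n := a_nonneg hAgap hA0 n
  have hAn1 : (0:ℝ) ≤ A (n+1) := a_nonneg hAgap hA0 (n+1)
  have hu1 : ε/2 * n ≤ Ffun A ε s := by
    have := monoA (Set.mem_Ici.2 hAn0) (Set.mem_Ici.2 hs0) h1
    rwa [Ffun_node hAgap hAgm hA0 hε n] at this
  have hu2 : Ffun A ε s ≤ ε/2 * (n+1) := by
    have := monoA (Set.mem_Ici.2 hs0) (Set.mem_Ici.2 hAn1) h2
    rw [Ffun_node hAgap hAgm hA0 hε (n+1)] at this
    push_cast at this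
    linarith
  have htB : t ≤ B (n+2) := by
    have hΦs : Φ s ≤ Φ (A (n+1)) :=
      hΦmono (Set.mem_Ici.2 hs0) (Set.mem_Ici.2 hAn1) h2
    linarith [hkey2 n]
  have hB2 : (0:ℝ) ≤ B (n+2) := a_nonneg hBgap hB0 (n+2)
  have hv2 : Ffun B ε t ≤ ε/2 * (n+2) := by
    have := monoB (Set.mem_Ici.2 ht0) (Set.mem_Ici.2 hB2) htB
    rw [Ffun_node hBgap hBgm hB0 hε (n+2)] at this
    push_cast at this
    linarith
  have hv0 : (0:ℝ) ≤ Ffun B ε t := Ffun_nonneg hBgap hBgm hB0 hε ht0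
  rw [abs_le]
  match n, h1, h2, hu1, hu2, htB, hv2 with
  | 0, h1, h2, hu1, hu2, htB, hv2 =>
    push_cast at hu1 hu2 hv2
    constructor <;> linarith
  | m+1, h1, h2, hu1, hu2, htB, hv2 =>
    have hφs : φ (A (m+1)) ≤ φ s :=
      hφmono (Set.mem_Ici.2 (a_nonneg hAgap hA0 (m+1))) (Set.mem_Ici.2 hs0) h1
    have htm : B m ≤ t := le_trans (hkey1 m) (by linarith)
    have hBm0 : (0:ℝ) ≤ B m := a_nonneg hBgap hB0 m
    have hv1 : ε/2 * m ≤ Ffun B ε t := by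
      have := monoB (Set.mem_Ici.2 hBm0) (Set.mem_Ici.2 ht0) htm
      rwa [Ffun_node hBgap hBgm hB0 hε m] at this
    push_cast at hu1 hu2 hv2
    constructor <;> linarith
end

section
/- Let (X,d_X), (Y,d_Y) be metric spaces and f : X → Y a coarse (bornologous) map: there exists a nondecreasing function Φ : [0,∞) → [0,∞) with d_Y(f(x),f(x')) ≤ Φ(d_X(x,x')) for all x, x' ∈ X. Then there exists a function c_Y : [0,∞) → [0,∞), concave, strictly increasing, continuous, unbounded, vanishing exactly at 0, and constants A > 0, B ≥ 0 such that, with d_Y' = c_Y ∘ d_Y (a metric), for all x, x' ∈ X: d_Y'(f(x), f(x')) ≤ A·d_X(x,x') + B; that is, f : (X,d_X) → (Y,d_Y') is large scale Lipschitz. -/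
open Set

section Aux

variable (Φ : ℝ → ℝ)

/-- auxiliary infimum of affine functions -/
noncomputable def auxG (s : ℝ) : ℝ :=
  ⨅ n : ℕ, ((n : ℝ) + 1 + s / (Φ ((n : ℝ) + 1) + 1))

variable (hΦ0 : ∀ r, 0 ≤ r → 0 ≤ Φ r) (hΦmono : MonotoneOn Φ (Set.Ici (0 : ℝ)))

include hΦ0

lemma auxG_denom_pos (n : ℕ) : (1 : ℝ) ≤ Φ ((n : ℝ) + 1) + 1 := by
  have := hΦ0 ((n : ℝ) + 1) (by positivity)
  linarith

lemma auxG_term_lb (s : ℝ) (n : ℕ) :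
    1 + min 0 s ≤ (n : ℝ) + 1 + s / (Φ ((n : ℝ) + 1) + 1) := by
  have hc : (1 : ℝ) ≤ Φ ((n : ℝ) + 1) + 1 := auxG_denom_pos Φ hΦ0 n
  have hc0 : (0 : ℝ) < Φ ((n : ℝ) + 1) + 1 := by linarith
  have hmin : min 0 s ≤ s / (Φ ((n : ℝ) + 1) + 1) := by
    rcases le_or_gt 0 s with h | h
    · exact (min_le_left _ _).trans (by positivity)
    · refine (min_le_right _ _).trans ?_
      rw [le_div_iff₀ hc0]
      nlinarith
  have hn : (0 : ℝ) ≤ (n : ℝ) := n.cast_nonneg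
  linarith

lemma auxG_bdd (s : ℝ) :
    BddBelow (Set.range fun n : ℕ => ((n : ℝ) + 1 + s / (Φ ((n : ℝ) + 1) + 1))) :=
  ⟨1 + min 0 s, by rintro _ ⟨n, rfl⟩; exact auxG_term_lb Φ hΦ0 s n⟩

lemma auxG_le (s : ℝ) (n : ℕ) :
    auxG Φ s ≤ (n : ℝ) + 1 + s / (Φ ((n : ℝ) + 1) + 1) :=
  ciInf_le (auxG_bdd Φ hΦ0 s) n

lemma le_auxG (s c : ℝ) (h : ∀ n : ℕ, c ≤ (n : ℝ) + 1 + s / (Φ ((n : ℝ) + 1) + 1)) :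
    c ≤ auxG Φ s := le_ciInf h

lemma auxG_one_le {s : ℝ} (hs : 0 ≤ s) : 1 ≤ auxG Φ s := by
  refine le_auxG Φ hΦ0 s 1 fun n => ?_
  have := auxG_term_lb Φ hΦ0 s n
  have := min_le_left (0:ℝ) s
  have hn : (0 : ℝ) ≤ (n : ℝ) := n.cast_nonneg
  have hc : (1 : ℝ) ≤ Φ ((n : ℝ) + 1) + 1 := auxG_denom_pos Φ hΦ0 n
  have : (0:ℝ) ≤ s / (Φ ((n : ℝ) + 1) + 1) := div_nonneg hs (by linarith)
  linarith

end Aux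

section Aux2

variable (Φ : ℝ → ℝ)
variable (hΦ0 : ∀ r, 0 ≤ r → 0 ≤ Φ r) (hΦmono : MonotoneOn Φ (Set.Ici (0 : ℝ)))

include hΦ0

lemma auxG_lip (s s' : ℝ) : auxG Φ s ≤ auxG Φ s' + |s - s'| := by
  have h : auxG Φ s - |s - s'| ≤ auxG Φ s' := by
    refine le_auxG Φ hΦ0 s' _ fun n => ?_
    have hc : (1 : ℝ) ≤ Φ ((n : ℝ) + 1) + 1 := auxG_denom_pos Φ hΦ0 n
    have hc0 : (0 : ℝ) < Φ ((n : ℝ) + 1) + 1 := by linarith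
    have h1 : auxG Φ s ≤ (n : ℝ) + 1 + s / (Φ ((n : ℝ) + 1) + 1) := auxG_le Φ hΦ0 s n
    have h2 : s / (Φ ((n : ℝ) + 1) + 1) - s' / (Φ ((n : ℝ) + 1) + 1) ≤ |s - s'| := by
      rw [div_sub_div_same]
      calc (s - s') / (Φ ((n : ℝ) + 1) + 1) ≤ |(s - s') / (Φ ((n : ℝ) + 1) + 1)| := le_abs_self _
        _ = |s - s'| / |Φ ((n : ℝ) + 1) + 1| := abs_div _ _
        _ ≤ |s - s'| / 1 := by
            apply div_le_div_of_nonneg_left (abs_nonneg _) one_pos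
            rw [abs_of_pos hc0]; exact hc
        _ = |s - s'| := div_one _
    linarith
  linarith

lemma auxG_concave : ConcaveOn ℝ (Set.Ici (0 : ℝ)) (auxG Φ) := by
  refine ⟨convex_Ici 0, fun x _ y _ a b ha hb hab => ?_⟩
  simp only [smul_eq_mul]
  refine le_auxG Φ hΦ0 _ _ fun n => ?_
  have h1 : a * auxG Φ x ≤ a * ((n : ℝ) + 1 + x / (Φ ((n : ℝ) + 1) + 1)) :=
    mul_le_mul_of_nonneg_left (auxG_le Φ hΦ0 x n) ha
  have h2 : b * auxG Φ y ≤ b * ((n : ℝ) + 1 + y / (Φ ((n : ℝ) + 1) + 1)) :=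
    mul_le_mul_of_nonneg_left (auxG_le Φ hΦ0 y n) hb
  have hc0 : (0 : ℝ) < Φ ((n : ℝ) + 1) + 1 := by
    have := auxG_denom_pos Φ hΦ0 n; linarith
  have key : a * ((n : ℝ) + 1 + x / (Φ ((n : ℝ) + 1) + 1))
      + b * ((n : ℝ) + 1 + y / (Φ ((n : ℝ) + 1) + 1))
      = (n : ℝ) + 1 + (a * x + b * y) / (Φ ((n : ℝ) + 1) + 1) := by
    field_simp
    linear_combination ((n : ℝ) + 1) * (Φ ((n : ℝ) + 1) + 1) * hab
  linarith

include hΦmono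

lemma auxG_strict {s s' : ℝ} (hs : 0 ≤ s) (h : s < s') : auxG Φ s < auxG Φ s' := by
  have hg1 : 1 ≤ auxG Φ s := auxG_one_le Φ hΦ0 hs
  have hden0 : 0 ≤ Φ (auxG Φ s + 1) := hΦ0 _ (by linarith)
  have hdenpos : (0 : ℝ) < Φ (auxG Φ s + 1) + 1 := by linarith
  set ε : ℝ := min 1 ((s' - s) / (Φ (auxG Φ s + 1) + 1)) with hε
  have hεpos : 0 < ε := lt_min one_pos (div_pos (by linarith) hdenpos)
  have key : auxG Φ s + ε ≤ auxG Φ s' := by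
    refine le_auxG Φ hΦ0 s' _ fun n => ?_
    have hc : (1 : ℝ) ≤ Φ ((n : ℝ) + 1) + 1 := auxG_denom_pos Φ hΦ0 n
    have hc0 : (0 : ℝ) < Φ ((n : ℝ) + 1) + 1 := by linarith
    rcases le_or_gt ((n : ℝ) + 1) (auxG Φ s + 1) with hcase | hcase
    · have hΦle : Φ ((n : ℝ) + 1) ≤ Φ (auxG Φ s + 1) :=
        hΦmono (Set.mem_Ici.mpr (by positivity)) (Set.mem_Ici.mpr (by linarith)) hcase
      have h1 : auxG Φ s ≤ (n : ℝ) + 1 + s / (Φ ((n : ℝ) + 1) + 1) := auxG_le Φ hΦ0 s n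
      have h2 : (s' - s) / (Φ (auxG Φ s + 1) + 1) ≤ (s' - s) / (Φ ((n : ℝ) + 1) + 1) :=
        div_le_div_of_nonneg_left (by linarith) hc0 (by linarith)
      have h3 : s' / (Φ ((n : ℝ) + 1) + 1)
          = s / (Φ ((n : ℝ) + 1) + 1) + (s' - s) / (Φ ((n : ℝ) + 1) + 1) := by
        rw [← add_div]; ring_nf
      have h4 : ε ≤ (s' - s) / (Φ (auxG Φ s + 1) + 1) := min_le_right _ _
      rw [h3]; linarith
    · have hdiv : 0 ≤ s' / (Φ ((n : ℝ) + 1) + 1) := div_nonneg (by linarith) (by linarith)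
      have h4 : ε ≤ 1 := min_le_left _ _
      linarith
  linarith

end Aux2

theorem stmt_14 (X Y : Type*) [MetricSpace X] [MetricSpace Y] (f : X → Y)
    (Φ : ℝ → ℝ)
    (hΦ0 : ∀ r, 0 ≤ r → 0 ≤ Φ r) (hΦmono : MonotoneOn Φ (Set.Ici (0 : ℝ)))
    (hcoarse : ∀ x x' : X, dist (f x) (f x') ≤ Φ (dist x x')) :
    ∃ cY : ℝ → ℝ, ∃ A B : ℝ,
      (∀ r, 0 ≤ r → 0 ≤ cY r) ∧ ConcaveOn ℝ (Set.Ici (0 : ℝ)) cY ∧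
        StrictMonoOn cY (Set.Ici (0 : ℝ)) ∧ ContinuousOn cY (Set.Ici (0 : ℝ)) ∧
        (∀ M : ℝ, ∃ r, 0 ≤ r ∧ M ≤ cY r) ∧
        (∀ r, 0 ≤ r → (cY r = 0 ↔ r = 0)) ∧
      IsMetric (fun y y' : Y => cY (dist y y')) ∧
      0 < A ∧ 0 ≤ B ∧
      (∀ x x' : X, cY (dist (f x) (f x')) ≤ A * dist x x' + B) := by
  set g : ℝ → ℝ := auxG Φ with hg
  set cY : ℝ → ℝ := fun s => min s (g s) with hcY
  have hg1 : ∀ s, 0 ≤ s → 1 ≤ g s := fun s hs => auxG_one_le Φ hΦ0 hs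
  have hcY0 : cY 0 = 0 := by
    simp only [hcY]
    exact min_eq_left (by linarith [hg1 0 le_rfl])
  -- nonneg
  have hpos : ∀ r, 0 ≤ r → 0 ≤ cY r := fun r hr =>
    le_min hr (by linarith [hg1 r hr])
  -- strict mono
  have hstrict : StrictMonoOn cY (Set.Ici (0 : ℝ)) := by
    intro s hs t _ hst
    exact lt_min ((min_le_left _ _).trans_lt hst)
      ((min_le_right _ _).trans_lt (auxG_strict Φ hΦ0 hΦmono hs hst))
  have hmono : MonotoneOn cY (Set.Ici (0 : ℝ)) := hstrict.monotoneOn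
  -- concave
  have hconc : ConcaveOn ℝ (Set.Ici (0 : ℝ)) cY := by
    refine ⟨convex_Ici 0, fun x hx y hy a b ha hb hab => ?_⟩
    have hG := (auxG_concave Φ hΦ0).2 hx hy ha hb hab
    simp only [smul_eq_mul] at hG ⊢
    refine le_min ?_ ?_
    · have h1 : a * cY x ≤ a * x := mul_le_mul_of_nonneg_left (min_le_left _ _) ha
      have h2 : b * cY y ≤ b * y := mul_le_mul_of_nonneg_left (min_le_left _ _) hb
      linarith
    · have h1 : a * cY x ≤ a * g x := mul_le_mul_of_nonneg_left (min_le_right _ _) ha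
      have h2 : b * cY y ≤ b * g y := mul_le_mul_of_nonneg_left (min_le_right _ _) hb
      linarith
  -- continuous
  have hlipg : LipschitzWith 1 g := by
    refine LipschitzWith.of_dist_le_mul fun s s' => ?_
    rw [Real.dist_eq, Real.dist_eq, NNReal.coe_one, one_mul, abs_sub_le_iff]
    constructor
    · linarith [auxG_lip Φ hΦ0 s s']
    · have := auxG_lip Φ hΦ0 s' s
      rw [abs_sub_comm] at this
      linarith
  have hcont : ContinuousOn cY (Set.Ici (0 : ℝ)) :=
    (Continuous.min continuous_id hlipg.continuous).continuousOn
  -- unbounded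
  have hunbdd : ∀ M : ℝ, ∃ r, 0 ≤ r ∧ M ≤ cY r := by
    intro M
    set M' : ℝ := max M 1 with hM'
    have hM1 : (1 : ℝ) ≤ M' := le_max_right _ _
    have hΦM : 0 ≤ Φ M' := hΦ0 _ (by linarith)
    refine ⟨M' * (Φ M' + 1), by positivity, ?_⟩
    have hr1 : M' ≤ M' * (Φ M' + 1) := le_mul_of_one_le_right (by linarith) (by linarith)
    have hr2 : M' ≤ g (M' * (Φ M' + 1)) := by
      refine le_auxG Φ hΦ0 _ _ fun n => ?_
      have hc : (1 : ℝ) ≤ Φ ((n : ℝ) + 1) + 1 := auxG_denom_pos Φ hΦ0 n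
      rcases le_or_gt M' ((n : ℝ) + 1) with hcase | hcase
      · have : 0 ≤ M' * (Φ M' + 1) / (Φ ((n : ℝ) + 1) + 1) :=
          div_nonneg (by positivity) (by linarith)
        linarith
      · have hΦle : Φ ((n : ℝ) + 1) ≤ Φ M' :=
          hΦmono (Set.mem_Ici.mpr (by positivity)) (Set.mem_Ici.mpr (by linarith)) hcase.le
        have h2 : M' * (Φ M' + 1) / (Φ M' + 1) ≤ M' * (Φ M' + 1) / (Φ ((n : ℝ) + 1) + 1) :=
          div_le_div_of_nonneg_left (by positivity) (by linarith) (by linarith)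
        have h3 : M' * (Φ M' + 1) / (Φ M' + 1) = M' := by
          field_simp
        have hn : (0 : ℝ) ≤ (n : ℝ) := n.cast_nonneg
        linarith
    exact (le_max_left M 1).trans (le_min hr1 hr2)
  -- zero iff
  have hzero : ∀ r, 0 ≤ r → (cY r = 0 ↔ r = 0) := by
    intro r hr
    constructor
    · intro h
      by_contra hne
      have hrpos : 0 < r := lt_of_le_of_ne hr (Ne.symm hne)
      have := hstrict (Set.self_mem_Ici) (Set.mem_Ici.mpr hr) hrpos
      rw [hcY0, h] at this
      exact lt_irrefl 0 this
    · intro h; rw [h]; exact hcY0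
  -- subadditivity
  have hsub : ∀ a b : ℝ, 0 ≤ a → 0 ≤ b → cY (a + b) ≤ cY a + cY b := by
    intro a b ha hb
    rcases eq_or_lt_of_le (add_nonneg ha hb) with hs | hs
    · have ha0 : a = 0 := by linarith
      have hb0 : b = 0 := by linarith
      simp [ha0, hb0, hcY0]
    · set s : ℝ := a + b with hsdef
      have h1 := hconc.2 (Set.mem_Ici.mpr hs.le) (Set.self_mem_Ici)
        (div_nonneg ha hs.le) (div_nonneg hb hs.le) (by field_simp; exact hsdef.symm)
      have h2 := hconc.2 (Set.mem_Ici.mpr hs.le) (Set.self_mem_Ici)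
        (div_nonneg hb hs.le) (div_nonneg ha hs.le) (by field_simp; ring)
      simp only [smul_eq_mul, mul_zero, add_zero, hcY0] at h1 h2
      have e1 : a / s * s = a := div_mul_cancel₀ a hs.ne'
      have e2 : b / s * s = b := div_mul_cancel₀ b hs.ne'
      rw [e1] at h1
      rw [e2] at h2
      have hsum : a / s * cY s + b / s * cY s = cY s := by
        field_simp
        rw [hsdef]; ring
      linarith
  -- the metric
  have hmetric : IsMetric (fun y y' : Y => cY (dist y y')) := by
    refine ⟨fun y y' => hpos _ dist_nonneg, fun y y' => ?_, fun y y' => by dsimp only; rw [dist_comm],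
      fun x y z => ?_⟩
    · rw [hzero _ dist_nonneg, dist_eq_zero]
    · calc cY (dist x z) ≤ cY (dist x y + dist y z) :=
            hmono (Set.mem_Ici.mpr dist_nonneg)
              (Set.mem_Ici.mpr (add_nonneg dist_nonneg dist_nonneg)) (dist_triangle x y z)
        _ ≤ cY (dist x y) + cY (dist y z) := hsub _ _ dist_nonneg dist_nonneg
  -- the large scale Lipschitz bound
  refine ⟨cY, 1, 3, hpos, hconc, hstrict, hcont, hunbdd, hzero, hmetric, one_pos,
    by norm_num, ?_⟩
  intro x x'
  set t : ℝ := dist x x' with ht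
  have ht0 : 0 ≤ t := dist_nonneg
  have hΦt : 0 ≤ Φ t := hΦ0 t ht0
  have step1 : cY (dist (f x) (f x')) ≤ cY (Φ t) :=
    hmono (Set.mem_Ici.mpr dist_nonneg) (Set.mem_Ici.mpr hΦt) (hcoarse x x')
  have step2 : cY (Φ t) ≤ g (Φ t) := min_le_right _ _
  have step3 : g (Φ t) ≤ ((⌈t⌉₊ : ℝ) + 1) + Φ t / (Φ ((⌈t⌉₊ : ℝ) + 1) + 1) :=
    auxG_le Φ hΦ0 _ ⌈t⌉₊
  have hceil : (⌈t⌉₊ : ℝ) < t + 1 := Nat.ceil_lt_add_one ht0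
  have hle : t ≤ (⌈t⌉₊ : ℝ) + 1 := by
    have := Nat.le_ceil t; linarith
  have hΦle : Φ t ≤ Φ ((⌈t⌉₊ : ℝ) + 1) :=
    hΦmono (Set.mem_Ici.mpr ht0) (Set.mem_Ici.mpr (by positivity)) hle
  have hc0 : (0 : ℝ) < Φ ((⌈t⌉₊ : ℝ) + 1) + 1 := by
    have := hΦ0 ((⌈t⌉₊ : ℝ) + 1) (by positivity); linarith
  have step4 : Φ t / (Φ ((⌈t⌉₊ : ℝ) + 1) + 1) ≤ 1 := by
    rw [div_le_one hc0]; linarith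
  calc cY (dist (f x) (f x')) ≤ ((⌈t⌉₊ : ℝ) + 1) + Φ t / (Φ ((⌈t⌉₊ : ℝ) + 1) + 1) := by
        linarith
    _ ≤ 1 * t + 3 := by linarith
end
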